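/- arXiv:1606.06557 — 6 statements merged into one kernel-verified Lean document; each statement's English description precedes it below -/
import Mathlib

section
/- Let k ∈ ℕ and let G be a finite graph of tree width at most k that is k-improved and an atom. Then for every set S ⊆ V(G), the number of connected components of G − S is at most k · (|S| choose 2) + 1. -/
open SimpleGraph

section Defs

variable {V : Type*}

/-- There exist `m` pairwise internally disjoint `u`–`v` paths in `G`: `m` distinct paths
from `u` to `v` that pairwise share no vertices other than `u` and `v`. -/
def InternallyDisjointPaths (G : SimpleGraph V) (u v : V) (m : ℕ) : Prop :=
  ∃ P : Fin m → G.Path u v, Function.Injective P ∧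
    ∀ i j, i ≠ j → ∀ x, x ∈ (P i).1.support → x ∈ (P j).1.support → x = u ∨ x = v

/-- `S` is a clique separator of `G`: `S` induces a clique and there are two vertices
outside `S` lying in different connected components of `G − S`. -/
def SimpleGraph.IsCliqueSeparator (G : SimpleGraph V) (S : Set V) : Prop :=
  G.IsClique S ∧ ∃ v w : ↑(Sᶜ : Set V), ¬ (G.induce (Sᶜ : Set V)).Reachable v w

/-- An atom is a graph without clique separators. -/
def SimpleGraph.IsAtomGraph (G : SimpleGraph V) : Prop :=
  ∀ S : Set V, ¬ G.IsCliqueSeparator S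

/-- `G` is `k`-improved: any two distinct vertices joined by `k + 1` pairwise internally
disjoint paths are adjacent. -/
def SimpleGraph.Improved (G : SimpleGraph V) (k : ℕ) : Prop :=
  ∀ u v : V, u ≠ v → InternallyDisjointPaths G u v (k + 1) → G.Adj u v

/-- A tree decomposition of `G`: a finite tree together with bags such that for every vertex
the set of tree nodes whose bag contains it is nonempty and connected, and every edge of `G`
is covered by some bag. -/
structure SimpleGraph.TreeDecomp (G : SimpleGraph V) where
  T : Type
  finite : Finite T
  tree : SimpleGraph T
  isTree : tree.IsTree
  bag : T → Set V
  bag_connected : ∀ v : V, (tree.induce {t | v ∈ bag t}).Connected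
  bag_cover : ∀ ⦃v w : V⦄, G.Adj v w → ∃ t, v ∈ bag t ∧ w ∈ bag t

/-- `G` has a tree decomposition of width at most `k`, i.e. all bags of size at most `k + 1`;
equivalently, the tree width of `G` is at most `k`. -/
def SimpleGraph.HasTreeDecompWidthLE (G : SimpleGraph V) (k : ℕ) : Prop :=
  ∃ td : G.TreeDecomp, ∀ t, (td.bag t).ncard ≤ k + 1

/-- `G` is 3-connected: more than 3 vertices, and removing any at most 2 vertices leaves
a connected graph. -/
def SimpleGraph.ThreeConnected (G : SimpleGraph V) : Prop :=
  3 < Nat.card V ∧ ∀ S : Set V, S.ncard ≤ 2 → (G.induce (Sᶜ : Set V)).Connected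

/-- `H` is a minor of `G`, witnessed by pairwise disjoint nonempty connected branch sets. -/
def SimpleGraph.HasMinor {W : Type*} (G : SimpleGraph V) (H : SimpleGraph W) : Prop :=
  ∃ B : W → Set V,
    (∀ h, (B h).Nonempty) ∧
    (∀ h, (G.induce (B h)).Connected) ∧
    (∀ h h', h ≠ h' → Disjoint (B h) (B h')) ∧
    (∀ h h', H.Adj h h' → ∃ x ∈ B h, ∃ y ∈ B h', G.Adj x y)

end Defs

section A
variable {V : Type} {G : SimpleGraph V} {S : Set V}

private lemma counting_aux {K B : Type} [Fintype K] [Fintype B] [DecidableEq B] (f : K → B) (k : ℕ)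
    (h : ∀ b, (Finset.univ.filter fun a => f a = b).card ≤ k) :
    Fintype.card K ≤ k * Fintype.card B := by
  classical
  calc Fintype.card K = ∑ b : B, (Finset.univ.filter fun a => f a = b).card := by
        rw [← Finset.card_univ,
          Finset.card_eq_sum_card_fiberwise (fun a _ => Finset.mem_univ (f a))]
    _ ≤ ∑ _b : B, k := Finset.sum_le_sum fun b _ => h b
    _ = k * Fintype.card B := by simp [Finset.card_univ, mul_comm]

/-- Walking in `G - N(C)` starting in component `C` stays in `C`. -/
private lemma walk_stays (C : (G.induce (Sᶜ : Set V)).ConnectedComponent)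
    {N : Set V}
    (hN : ∀ s : V, s ∈ S → (∃ x : ↥(Sᶜ : Set V),
      (G.induce (Sᶜ : Set V)).connectedComponentMk x = C ∧ G.Adj s ↑x) → s ∈ N)
    {a b : ↥(Nᶜ : Set V)} (w : (G.induce (Nᶜ : Set V)).Walk a b)
    (ha : (a : V) ∈ (Sᶜ : Set V))
    (hc : (G.induce (Sᶜ : Set V)).connectedComponentMk ⟨a, ha⟩ = C) :
    ∃ hb : (b : V) ∈ (Sᶜ : Set V),
      (G.induce (Sᶜ : Set V)).connectedComponentMk ⟨b, hb⟩ = C := by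
  induction w with
  | nil => exact ⟨ha, hc⟩
  | @cons a a' b hadj w ih =>
    have hGadj : G.Adj (a : V) (a' : V) := hadj
    by_cases h' : (a' : V) ∈ (Sᶜ : Set V)
    · have : (G.induce (Sᶜ : Set V)).Adj ⟨a, ha⟩ ⟨a', h'⟩ := hGadj
      exact ih h' ((ConnectedComponent.connectedComponentMk_eq_of_adj this).symm.trans hc)
    · exfalso
      have hs : (a' : V) ∈ S := by simpa using h'
      exact a'.2 (hN _ hs ⟨⟨a, ha⟩, hc, hGadj.symm⟩)

/-- Every component has a non-adjacent pair of attachment vertices in `S`,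
provided there is another component. -/
private lemma exists_pair (hatom : G.IsAtomGraph)
    (C C' : (G.induce (Sᶜ : Set V)).ConnectedComponent) (hne : C ≠ C') :
    ∃ u v : V, u ∈ S ∧ v ∈ S ∧ u ≠ v ∧ ¬ G.Adj u v ∧
      (∃ x : ↥(Sᶜ : Set V), (G.induce (Sᶜ : Set V)).connectedComponentMk x = C ∧ G.Adj u ↑x) ∧
      (∃ y : ↥(Sᶜ : Set V), (G.induce (Sᶜ : Set V)).connectedComponentMk y = C ∧ G.Adj v ↑y) := by
  classical
  set N : Set V := {s | s ∈ S ∧ ∃ x : ↥(Sᶜ : Set V),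
      (G.induce (Sᶜ : Set V)).connectedComponentMk x = C ∧ G.Adj s ↑x} with hNdef
  have hNS : N ⊆ S := fun s hs => hs.1
  obtain ⟨c, hc⟩ := C.exists_rep
  obtain ⟨c', hc'⟩ := C'.exists_rep
  have hcN : (c : V) ∈ (Nᶜ : Set V) := fun h => c.2 (hNS h)
  have hc'N : (c' : V) ∈ (Nᶜ : Set V) := fun h => c'.2 (hNS h)
  have hsep : ∃ v w : ↥(Nᶜ : Set V), ¬ (G.induce (Nᶜ : Set V)).Reachable v w := by
    refine ⟨⟨c, hcN⟩, ⟨c', hc'N⟩, fun hr => ?_⟩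
    obtain ⟨w⟩ := hr
    obtain ⟨hb, hbc⟩ := walk_stays C (fun s hs hx => Set.mem_setOf.mpr ⟨hs, hx⟩) w c.2 (by exact hc)
    apply hne
    rw [← hc', ← hbc]
    congr
  have hnotclique : ¬ G.IsClique N := fun hcl => hatom N ⟨hcl, hsep⟩
  rw [SimpleGraph.isClique_iff, Set.Pairwise] at hnotclique
  push_neg at hnotclique
  obtain ⟨u, hu, v, hv, huv, hna⟩ := hnotclique
  exact ⟨u, v, hu.1, hv.1, huv, hna, hu.2, hv.2⟩

/-- A `u`–`v` path through component `C`. -/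
private lemma exists_path_through (u v : V)
    (C : (G.induce (Sᶜ : Set V)).ConnectedComponent)
    (hx : ∃ x : ↥(Sᶜ : Set V), (G.induce (Sᶜ : Set V)).connectedComponentMk x = C ∧ G.Adj u ↑x)
    (hy : ∃ y : ↥(Sᶜ : Set V), (G.induce (Sᶜ : Set V)).connectedComponentMk y = C ∧ G.Adj v ↑y) :
    ∃ P : G.Path u v, ∀ z ∈ P.1.support, z = u ∨ z = v ∨
      ∃ hz : z ∈ (Sᶜ : Set V), (G.induce (Sᶜ : Set V)).connectedComponentMk ⟨z, hz⟩ = C := by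
  classical
  obtain ⟨x, hxC, hux⟩ := hx
  obtain ⟨y, hyC, hvy⟩ := hy
  have hreach : (G.induce (Sᶜ : Set V)).Reachable x y :=
    ConnectedComponent.exact (hxC.trans hyC.symm)
  obtain ⟨w0⟩ := hreach
  let w1 : G.Walk (x : V) (y : V) := w0.map (SimpleGraph.Embedding.induce (Sᶜ : Set V)).toHom
  let w2 : G.Walk u v := Walk.cons hux (w1.concat hvy.symm)
  refine ⟨w2.toPath, fun z hz => ?_⟩
  have hz2 : z ∈ w2.support := Walk.support_toPath_subset w2 hz
  rw [Walk.support_cons] at hz2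
  rcases List.mem_cons.mp hz2 with h | h
  · exact Or.inl h
  rw [Walk.support_concat] at h
  rcases List.mem_append.mp h with h | h
  · -- z in w1.support
    right; right
    replace h : z ∈ w0.support.map (SimpleGraph.Embedding.induce (G := G) (Sᶜ : Set V)).toHom := by
      rw [← Walk.support_map]; exact h
    obtain ⟨z', hz', rfl⟩ := List.mem_map.mp h
    refine ⟨z'.2, ?_⟩
    have : (G.induce (Sᶜ : Set V)).Reachable x z' := (w0.takeUntil z' hz').reachable
    have h2 : (G.induce (Sᶜ : Set V)).connectedComponentMk z' = C :=
      (ConnectedComponent.sound this).symm.trans hxC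
    simpa using h2
  · exact Or.inr (Or.inl (List.mem_singleton.mp h))

/-- A path between distinct non-adjacent vertices has an internal vertex. -/
private lemma exists_internal {u v : V} (P : G.Path u v) (huv : u ≠ v) (hna : ¬ G.Adj u v) :
    ∃ z ∈ P.1.support, z ≠ u ∧ z ≠ v := by
  obtain ⟨w, hw⟩ := P
  match w, hw with
  | Walk.nil, _ => exact absurd rfl huv
  | Walk.cons h Walk.nil, _ => exact absurd h hna
  | Walk.cons (v := b) h (Walk.cons (v := c) h' q'), hw =>
    have hnodup := hw.support_nodup
    simp only [Walk.support_cons, List.nodup_cons] at hnodup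
    refine ⟨b, ?_, ?_, ?_⟩
    · simp [Walk.support_cons]
    · rintro rfl
      exact hnodup.1 (by simp [Walk.support_cons])
    · rintro rfl
      exact hnodup.2.1 (Walk.end_mem_support q')

end A

/-- If `G` is a finite graph of tree width at most `k` that is `k`-improved and
an atom, then for every `S ⊆ V(G)` the number of connected components of `G − S` is at most
`k * (|S| choose 2) + 1`. -/
theorem tw_improved_atom_bounded_separability {V : Type} [Fintype V] (k : ℕ)
    (G : SimpleGraph V) (htw : G.HasTreeDecompWidthLE k) (himp : G.Improved k)
    (hatom : G.IsAtomGraph) (S : Set V) :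
    Nat.card ((G.induce (Sᶜ : Set V)).ConnectedComponent) ≤ k * (S.ncard).choose 2 + 1 := by
  classical
  by_cases hcard : Nat.card ((G.induce (Sᶜ : Set V)).ConnectedComponent) ≤ 1
  · exact hcard.trans (Nat.le_add_left 1 _)
  push_neg at hcard
  haveI : Fintype ↥(Sᶜ : Set V) := Fintype.ofFinite _
  haveI : Finite ((G.induce (Sᶜ : Set V)).ConnectedComponent) := Quot.finite _
  haveI : Fintype ((G.induce (Sᶜ : Set V)).ConnectedComponent) := Fintype.ofFinite _
  haveI hnt : Nontrivial ((G.induce (Sᶜ : Set V)).ConnectedComponent) :=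
    Finite.one_lt_card_iff_nontrivial.mp hcard
  haveI : Fintype ↥S := Fintype.ofFinite _
  have hP : ∀ C : (G.induce (Sᶜ : Set V)).ConnectedComponent,
      ∃ u v : V, u ∈ S ∧ v ∈ S ∧ u ≠ v ∧ ¬ G.Adj u v ∧
      (∃ x : ↥(Sᶜ : Set V), (G.induce (Sᶜ : Set V)).connectedComponentMk x = C ∧ G.Adj u ↑x) ∧
      (∃ y : ↥(Sᶜ : Set V), (G.induce (Sᶜ : Set V)).connectedComponentMk y = C ∧ G.Adj v ↑y) := by
    intro C
    obtain ⟨C', hC'⟩ := exists_ne C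
    exact exists_pair hatom C C' (Ne.symm hC')
  choose u v hu hv hne hna hxw hyw using hP
  set f : (G.induce (Sᶜ : Set V)).ConnectedComponent → {z : Sym2 ↥S // ¬ z.IsDiag} :=
    fun C => ⟨s(⟨u C, hu C⟩, ⟨v C, hv C⟩), by
      rw [Sym2.mk_isDiag_iff]
      exact fun h => hne C (congrArg Subtype.val h)⟩ with hf
  have hfiber : ∀ b, (Finset.univ.filter fun C => f C = b).card ≤ k := by
    intro b
    by_contra hb
    push_neg at hb
    obtain ⟨g⟩ : Nonempty (Fin (k+1) ↪ {C // C ∈ Finset.univ.filter fun C => f C = b}) := by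
      apply Function.Embedding.nonempty_of_card_le
      rw [Fintype.card_fin, Fintype.card_coe]
      omega
    obtain ⟨a0, b0, hab⟩ : ∃ a0 b0 : ↥S, b.1 = s(a0, b0) :=
      Sym2.ind (fun x y => ⟨x, y, rfl⟩) b.1
    set U : V := (a0 : V)
    set W : V := (b0 : V)
    have hUW : U ≠ W := by
      intro h
      exact (hab ▸ b.2) (Sym2.mk_isDiag_iff.mpr (Subtype.ext h))
    set Ci : Fin (k+1) → (G.induce (Sᶜ : Set V)).ConnectedComponent := fun i => (g i).1 with hCi
    have hCinj : Function.Injective Ci := fun i j h => g.injective (Subtype.ext h)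
    have key : ∀ i, (u (Ci i) = U ∧ v (Ci i) = W) ∨ (u (Ci i) = W ∧ v (Ci i) = U) := by
      intro i
      have hmem := (g i).2
      rw [Finset.mem_filter] at hmem
      have h1 : (f (Ci i)).1 = s(a0, b0) := by rw [hmem.2, hab]
      rw [hf] at h1
      simp only at h1
      rw [Sym2.eq_iff] at h1
      rcases h1 with ⟨h1, h2⟩ | ⟨h1, h2⟩
      · exact Or.inl ⟨congrArg Subtype.val h1, congrArg Subtype.val h2⟩
      · exact Or.inr ⟨congrArg Subtype.val h1, congrArg Subtype.val h2⟩
    have hnAdj : ¬ G.Adj U W := by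
      rcases key 0 with ⟨h1, h2⟩ | ⟨h1, h2⟩
      · rw [← h1, ← h2]; exact hna _
      · rw [← h1, ← h2]; exact fun h => hna _ h.symm
    have hUx : ∀ i, ∃ x : ↥(Sᶜ : Set V),
        (G.induce (Sᶜ : Set V)).connectedComponentMk x = Ci i ∧ G.Adj U ↑x := by
      intro i
      rcases key i with ⟨h1, _⟩ | ⟨_, h2⟩
      · exact h1 ▸ hxw (Ci i)
      · exact h2 ▸ hyw (Ci i)
    have hWy : ∀ i, ∃ y : ↥(Sᶜ : Set V),
        (G.induce (Sᶜ : Set V)).connectedComponentMk y = Ci i ∧ G.Adj W ↑y := by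
      intro i
      rcases key i with ⟨_, h2⟩ | ⟨h1, _⟩
      · exact h2 ▸ hyw (Ci i)
      · exact h1 ▸ hxw (Ci i)
    choose P hPsupp using fun i => exists_path_through U W (Ci i) (hUx i) (hWy i)
    have hcomp : ∀ i (z : V), z ∈ (P i).1.support → z ≠ U → z ≠ W →
        ∃ hz : z ∈ (Sᶜ : Set V), (G.induce (Sᶜ : Set V)).connectedComponentMk ⟨z, hz⟩ = Ci i := by
      intro i z hzs hzU hzW
      rcases hPsupp i z hzs with h | h | h
      · exact absurd h hzU
      · exact absurd h hzW
      · exact h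
    have hPinj : Function.Injective P := by
      intro i j hij
      by_contra hij'
      obtain ⟨z, hzs, hzU, hzW⟩ := exists_internal (P i) hUW hnAdj
      obtain ⟨hz1, hc1⟩ := hcomp i z hzs hzU hzW
      obtain ⟨hz2, hc2⟩ := hcomp j z (hij ▸ hzs) hzU hzW
      exact hij' (hCinj (hc1.symm.trans hc2))
    have hdisj : ∀ i j, i ≠ j → ∀ x, x ∈ (P i).1.support → x ∈ (P j).1.support →
        x = U ∨ x = W := by
      intro i j hij x hxi hxj
      by_contra hx
      push_neg at hx
      obtain ⟨hz1, hc1⟩ := hcomp i x hxi hx.1 hx.2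
      obtain ⟨hz2, hc2⟩ := hcomp j x hxj hx.1 hx.2
      exact hij (hCinj (hc1.symm.trans hc2))
    exact hnAdj (himp U W hUW ⟨P, hPinj, hdisj⟩)
  calc Nat.card ((G.induce (Sᶜ : Set V)).ConnectedComponent)
      = Fintype.card _ := Nat.card_eq_fintype_card
    _ ≤ k * Fintype.card {z : Sym2 ↥S // ¬ z.IsDiag} := counting_aux f k hfiber
    _ = k * (Fintype.card ↥S).choose 2 := by rw [Sym2.card_subtype_not_diag]
    _ = k * (S.ncard).choose 2 := by
        rw [← Nat.card_coe_set_eq, Nat.card_eq_fintype_card]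
    _ ≤ k * (S.ncard).choose 2 + 1 := Nat.le_succ _
end

section
/- Let ℓ ∈ ℕ and let G be a finite 3-connected graph that does not contain K_{3,ℓ} as a minor. Then for every set S ⊆ V(G), the number of connected components of G − S is at most max(1, ℓ · (|S| choose 3)). -/
open SimpleGraph

section Helpers
variable {V : Type*} {G : SimpleGraph V}

lemma my_walk_closed {A C : Set V} (hcl : ∀ x y, x ∈ C → y ∈ A → G.Adj x y → y ∈ C) :
    ∀ {a b : ↑A} (_ : (G.induce A).Walk a b), ↑a ∈ C → ↑b ∈ C := by
  intro a b p
  induction p with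
  | nil => exact id
  | @cons u v w h p ih => intro ha; exact ih (hcl _ _ ha v.2 h)

lemma my_connected_singleton (x : V) : (G.induce {x}).Connected := by
  constructor
  intro a b
  have : a = b := Subtype.ext (a.2.trans b.2.symm)
  exact this ▸ Reachable.refl _

/-- Carrier of a connected component of an induced subgraph, as a set of `V`. -/
def myCarrier {A : Set V} (K : (G.induce A).ConnectedComponent) : Set V :=
  Subtype.val '' K.supp

lemma mem_myCarrier {A : Set V} {K : (G.induce A).ConnectedComponent} {x : V} :
    x ∈ myCarrier K ↔ ∃ hx : x ∈ A, (G.induce A).connectedComponentMk ⟨x, hx⟩ = K := by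
  constructor
  · rintro ⟨⟨y, hy⟩, hmem, rfl⟩; exact ⟨hy, hmem⟩
  · rintro ⟨hx, h⟩; exact ⟨⟨x, hx⟩, h, rfl⟩

lemma myCarrier_subset {A : Set V} (K : (G.induce A).ConnectedComponent) : myCarrier K ⊆ A := by
  rintro x ⟨y, _, rfl⟩; exact y.2

lemma myCarrier_nonempty {A : Set V} (K : (G.induce A).ConnectedComponent) :
    (myCarrier K).Nonempty := by
  obtain ⟨v, rfl⟩ := K.exists_rep
  exact ⟨v, v, rfl, rfl⟩

lemma myCarrier_disjoint {A : Set V} {K K' : (G.induce A).ConnectedComponent} (h : K ≠ K') :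
    Disjoint (myCarrier K) (myCarrier K') := by
  rw [Set.disjoint_left]
  rintro x hx hx'
  rw [mem_myCarrier] at hx hx'
  obtain ⟨h1, h2⟩ := hx
  obtain ⟨h1', h2'⟩ := hx'
  exact h (h2 ▸ h2' ▸ rfl)

lemma myCarrier_connected [DecidableEq V] {A : Set V} (K : (G.induce A).ConnectedComponent) :
    (G.induce (myCarrier K)).Connected := by
  obtain ⟨u0, hu0⟩ := myCarrier_nonempty K
  apply G.induce_connected_of_patches u0 hu0
  intro v hv
  rw [mem_myCarrier] at hu0 hv
  obtain ⟨hu0A, hu0K⟩ := hu0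
  obtain ⟨hvA, hvK⟩ := hv
  have hreach : (G.induce A).Reachable ⟨u0, hu0A⟩ ⟨v, hvA⟩ :=
    ConnectedComponent.exact (hu0K.trans hvK.symm)
  obtain ⟨p⟩ := hreach
  let q : G.Walk u0 v := p.map (SimpleGraph.Embedding.induce A).toHom
  have hsupp : {x | x ∈ q.support} ⊆ myCarrier K := by
    intro x hx
    simp only [Set.mem_setOf_eq, q, Walk.support_map, List.mem_map] at hx
    have hx2 : x ∈ p.support.map (SimpleGraph.Embedding.induce (G := G) A).toHom := by
      rw [← Walk.support_map]; exact hx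
    obtain ⟨y, hy, rfl⟩ := List.mem_map.mp hx2
    have hr : (G.induce A).Reachable ⟨u0, hu0A⟩ y := ((p.takeUntil y hy)).reachable
    rw [mem_myCarrier]
    refine ⟨y.2, ?_⟩
    have := (ConnectedComponent.sound hr.symm).trans hu0K
    exact this
  refine ⟨{x | x ∈ q.support}, hsupp, q.start_mem_support, q.end_mem_support, ?_⟩
  exact (q.connected_induce_support).preconnected _ _

end Helpers

/-- If `G` is a finite 3-connected graph with no `K_{3,ℓ}` minor, then for every
`S ⊆ V(G)` the number of connected components of `G − S` is at most `max 1 (ℓ * (|S| choose 3))`. -/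
theorem threeConnected_no_K3l_minor_bounded_separability {V : Type} [Fintype V] (ℓ : ℕ)
    (G : SimpleGraph V) (h3 : G.ThreeConnected)
    (hminor : ¬ G.HasMinor (completeBipartiteGraph (Fin 3) (Fin ℓ))) (S : Set V) :
    Nat.card ((G.induce (Sᶜ : Set V)).ConnectedComponent) ≤ max 1 (ℓ * (S.ncard).choose 3) := by
  classical
  rcases Nat.eq_zero_or_pos ℓ with rfl | hl
  · -- ℓ = 0 : K_{3,0} is always a minor, contradiction
    exfalso; apply hminor
    have hcard : 3 ≤ (Finset.univ : Finset V).card := by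
      have := h3.1; rw [Nat.card_eq_fintype_card, ← Finset.card_univ] at this; omega
    obtain ⟨t, _, htc⟩ := Finset.exists_subset_card_eq hcard
    let e : Fin 3 → V := fun i => (t.equivFin.symm (Fin.cast htc.symm i)).1
    have he : Function.Injective e := fun i j h => by
      have := t.equivFin.symm.injective (Subtype.ext h)
      simpa [Fin.ext_iff] using congrArg Fin.val this
    refine ⟨Sum.elim (fun i => {e i}) (fun j => j.elim0), ?_, ?_, ?_, ?_⟩
    · rintro (i | j)
      · exact ⟨_, rfl⟩
      · exact j.elim0
    · rintro (i | j)
      · exact my_connected_singleton _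
      · exact j.elim0
    · rintro (i | j) (i' | j') hne
      · simp only [Sum.elim_inl, Set.disjoint_singleton_left, Set.mem_singleton_iff]
        exact fun h => hne (congrArg Sum.inl (he h))
      · exact j'.elim0
      · exact j.elim0
      · exact j.elim0
    · rintro (i | j) (i' | j') hadj
      · simp at hadj
      · exact j'.elim0
      · exact j.elim0
      · exact j.elim0
  by_cases hS : S.ncard ≤ 2
  · have hconn := h3.2 S hS
    have h1 : Nat.card ((G.induce (Sᶜ : Set V)).ConnectedComponent) = 1 := by
      rw [Nat.card_eq_one_iff_unique]
      constructor
      · constructor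
        intro a b
        obtain ⟨u, rfl⟩ := a.exists_rep
        obtain ⟨v, rfl⟩ := b.exists_rep
        exact ConnectedComponent.sound (hconn.preconnected u v)
      · obtain ⟨v⟩ := hconn.nonempty
        exact ⟨(G.induce (Sᶜ : Set V)).connectedComponentMk v⟩
    rw [h1]; exact le_max_left _ _
  push_neg at hS
  have hchoose : 0 < (S.ncard).choose 3 := Nat.choose_pos hS
  rw [max_eq_right (Nat.one_le_iff_ne_zero.mpr (by positivity))]
  by_contra hlt
  push_neg at hlt
  set GA := G.induce (Sᶜ : Set V) with hGA
  haveI : Finite GA.ConnectedComponent := Quot.finite _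
  -- boundary of a component
  let bd : GA.ConnectedComponent → Finset V := fun K =>
    Finset.univ.filter (fun s => s ∈ S ∧ ∃ v ∈ myCarrier K, G.Adj s v)
  have hbdS : ∀ K, ↑(bd K) ⊆ S := fun K x hx => (Finset.mem_filter.mp hx).2.1
  haveI : Fintype GA.ConnectedComponent := Fintype.ofFinite _
  have hnontriv : Nontrivial GA.ConnectedComponent := by
    rw [← Fintype.one_lt_card_iff_nontrivial]
    rw [Nat.card_eq_fintype_card] at hlt
    have : 1 ≤ ℓ * (S.ncard).choose 3 := Nat.one_le_iff_ne_zero.mpr (by positivity)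
    omega
  have hbd3 : ∀ K, 3 ≤ (bd K).card := by
    intro K
    by_contra hc
    push_neg at hc
    have hle2 : ((bd K : Finset V) : Set V).ncard ≤ 2 := by
      rw [Set.ncard_coe_finset]; omega
    have hconn := h3.2 _ hle2
    obtain ⟨K', hK'⟩ := exists_ne K
    obtain ⟨x, hx⟩ := myCarrier_nonempty K
    obtain ⟨y, hy⟩ := myCarrier_nonempty K'
    have hxc : x ∈ ((bd K : Finset V) : Set V)ᶜ := fun hmem =>
      (myCarrier_subset K hx) (hbdS K hmem)
    have hyc : y ∈ ((bd K : Finset V) : Set V)ᶜ := fun hmem =>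
      (myCarrier_subset K' hy) (hbdS K hmem)
    obtain ⟨p⟩ := hconn.preconnected ⟨x, hxc⟩ ⟨y, hyc⟩
    have hclosed : ∀ a b, a ∈ myCarrier K → b ∈ ((bd K : Finset V) : Set V)ᶜ →
        G.Adj a b → b ∈ myCarrier K := by
      intro a b ha hb hab
      by_cases hbS : b ∈ S
      · exact absurd (Finset.mem_filter.mpr ⟨Finset.mem_univ _, hbS, a, ha, hab.symm⟩) hb
      · rw [mem_myCarrier] at ha ⊢
        obtain ⟨haA, haK⟩ := ha
        refine ⟨hbS, ?_⟩
        have hadj : GA.Adj ⟨a, haA⟩ ⟨b, hbS⟩ := hab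
        exact (ConnectedComponent.connectedComponentMk_eq_of_adj hadj.symm).trans haK
    have hyK : y ∈ myCarrier K := my_walk_closed hclosed p hx
    exact (Set.disjoint_left.mp (myCarrier_disjoint hK') hy) hyK
  -- choose a 3-subset of each boundary
  have hchoice : ∀ K : GA.ConnectedComponent, ∃ T ⊆ bd K, T.card = 3 :=
    fun K => Finset.exists_subset_card_eq (hbd3 K)
  choose g hgsub hgcard using hchoice
  have hmaps : ∀ K ∈ (Finset.univ : Finset GA.ConnectedComponent),
      g K ∈ S.toFinset.powersetCard 3 := by
    intro K _
    exact Finset.mem_powersetCard.mpr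
      ⟨fun x hx => Set.mem_toFinset.mpr (hbdS K (hgsub K hx)), hgcard K⟩
  have hcount : (S.toFinset.powersetCard 3).card * ℓ < (Finset.univ : Finset GA.ConnectedComponent).card := by
    rw [Finset.card_powersetCard, ← Set.ncard_eq_toFinset_card', Finset.card_univ,
      ← Nat.card_eq_fintype_card]
    calc (S.ncard).choose 3 * ℓ = ℓ * (S.ncard).choose 3 := Nat.mul_comm _ _
      _ < Nat.card GA.ConnectedComponent := hlt
  obtain ⟨T, hT, hfib⟩ := Finset.exists_lt_card_fiber_of_mul_lt_card_of_maps_to hmaps hcount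
  obtain ⟨hTS, hTcard⟩ := Finset.mem_powersetCard.mp hT
  obtain ⟨t, htsub, htcard⟩ := Finset.exists_subset_card_eq (le_of_lt hfib)
  -- enumerate the ℓ components
  let comp : Fin ℓ → GA.ConnectedComponent := fun j => (t.equivFin.symm (Fin.cast htcard.symm j)).1
  have hcompinj : Function.Injective comp := fun i j h => by
    have := t.equivFin.symm.injective (Subtype.ext h)
    simpa [Fin.ext_iff] using congrArg Fin.val this
  have hcompfib : ∀ j, g (comp j) = T := by
    intro j
    have : comp j ∈ t := (t.equivFin.symm _).2
    exact (Finset.mem_filter.mp (htsub this)).2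
  -- enumerate T
  let tv : Fin 3 → V := fun i => (T.equivFin.symm (Fin.cast hTcard.symm i)).1
  have htvinj : Function.Injective tv := fun i j h => by
    have := T.equivFin.symm.injective (Subtype.ext h)
    simpa [Fin.ext_iff] using congrArg Fin.val this
  have htvT : ∀ i, tv i ∈ T := fun i => (T.equivFin.symm _).2
  have htvS : ∀ i, tv i ∈ S := fun i => Set.mem_toFinset.mp (hTS (htvT i))
  have htvbd : ∀ i j, tv i ∈ bd (comp j) := fun i j =>
    hgsub (comp j) ((hcompfib j).symm ▸ htvT i)
  -- build the K_{3,ℓ} minor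
  apply hminor
  refine ⟨Sum.elim (fun i => {tv i}) (fun j => myCarrier (comp j)), ?_, ?_, ?_, ?_⟩
  · rintro (i | j)
    · exact ⟨_, rfl⟩
    · exact myCarrier_nonempty _
  · rintro (i | j)
    · exact my_connected_singleton _
    · exact myCarrier_connected _
  · rintro (i | j) (i' | j') hne
    · simp only [Sum.elim_inl, Set.disjoint_singleton_left, Set.mem_singleton_iff]
      exact fun h => hne (congrArg Sum.inl (htvinj h))
    · simp only [Sum.elim_inl, Sum.elim_inr, Set.disjoint_singleton_left]
      exact fun h => (myCarrier_subset _ h) (htvS i)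
    · simp only [Sum.elim_inl, Sum.elim_inr, Set.disjoint_singleton_right]
      exact fun h => (myCarrier_subset _ h) (htvS i')
    · exact myCarrier_disjoint (fun h => hne (congrArg Sum.inr (hcompinj h)))
  · rintro (i | j) (i' | j') hadj
    · simp at hadj
    · obtain ⟨hS', v, hv, hadj'⟩ := (Finset.mem_filter.mp (htvbd i j')).2
      exact ⟨tv i, rfl, v, hv, hadj'⟩
    · obtain ⟨hS', v, hv, hadj'⟩ := (Finset.mem_filter.mp (htvbd i' j)).2
      exact ⟨v, hv, tv i', rfl, hadj'.symm⟩
    · simp at hadj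
end

section
/- Let G be a finite graph and (T, β) a tree decomposition of G. Then there exists a tree decomposition (T', β') of G together with a partition of V(T') into two sets V_a (a-nodes) and V_b (b-nodes) such that: (1) every edge of T' joins an a-node and a b-node; (2) for every a-node t and all distinct neighbors u_1, u_2 of t in T', β'(t) = β'(u_1) ∩ β'(u_2); (3) for every b-node t and all distinct neighbors u_1, u_2 of t in T', β'(t) ∩ β'(u_1) ≠ β'(t) ∩ β'(u_2); (4) every node of T' of degree at most 1 is a b-node; and moreover every bag β'(t) is contained in some bag β(s) of the original decomposition. -/
open SimpleGraph

set_option linter.unusedSectionVars false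
namespace Seg
open Relation
variable {V : Type} [Fintype V] {G : SimpleGraph V} (td : G.TreeDecomp)

/-- Bag intersection of an edge. -/
def S (e : td.tree.edgeSet) : Set V := {v | ∀ x ∈ (e : Sym2 td.T), v ∈ td.bag x}

/-- Generating relation: share an endpoint and same interface. -/
def R (e f : td.tree.edgeSet) : Prop :=
  S td e = S td f ∧ ∃ x, x ∈ (e : Sym2 td.T) ∧ x ∈ (f : Sym2 td.T)

def sd : Setoid td.tree.edgeSet := EqvGen.setoid (R td)

def Q := Quotient (sd td)

lemma S_eq_of_eqvGen {e f : td.tree.edgeSet} (h : EqvGen (R td) e f) : S td e = S td f := by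
  induction h with
  | rel _ _ h => exact h.1
  | refl => rfl
  | symm _ _ _ ih => exact ih.symm
  | trans _ _ _ _ _ ih1 ih2 => exact ih1.trans ih2

def Sbar : Q td → Set V :=
  Quotient.lift (S td) (fun _ _ h => S_eq_of_eqvGen td h)

def incid (t : td.T) (c : Q td) : Prop :=
  ∃ e : td.tree.edgeSet, Quotient.mk (sd td) e = c ∧ t ∈ (e : Sym2 td.T)

/-- The new tree: original nodes plus class nodes. -/
def tree' : SimpleGraph (td.T ⊕ Q td) where
  Adj a b := (∃ t c, a = .inl t ∧ b = .inr c ∧ incid td t c) ∨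
    (∃ t c, a = .inr c ∧ b = .inl t ∧ incid td t c)
  symm := by constructor; rintro a b (⟨t, c, rfl, rfl, h⟩ | ⟨t, c, rfl, rfl, h⟩)
             · exact Or.inr ⟨t, c, rfl, rfl, h⟩
             · exact Or.inl ⟨t, c, rfl, rfl, h⟩
  loopless := by constructor; rintro a (⟨t, c, rfl, h, -⟩ | ⟨t, c, rfl, h, -⟩) <;> simp at h

lemma tree'_adj_inl_inr {t : td.T} {c : Q td} :
    (tree' td).Adj (.inl t) (.inr c) ↔ incid td t c := by
  constructor
  · rintro (⟨t', c', h1, h2, h⟩ | ⟨t', c', h, -⟩)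
    · cases h1; cases h2; exact h
    · simp at h
  · intro h; exact Or.inl ⟨t, c, rfl, rfl, h⟩

lemma tree'_adj_inl {t : td.T} {x} (h : (tree' td).Adj (.inl t) x) :
    ∃ c, x = .inr c ∧ incid td t c := by
  rcases h with (⟨t', c', h1, rfl, h⟩ | ⟨t', c', h1, -⟩)
  · cases h1; exact ⟨c', rfl, h⟩
  · simp at h1

lemma tree'_adj_inr {c : Q td} {x} (h : (tree' td).Adj (.inr c) x) :
    ∃ t, x = .inl t ∧ incid td t c := by
  rcases h with (⟨t', c', h1, -⟩ | ⟨t', c', h1, rfl, h⟩)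
  · simp at h1
  · obtain rfl := Sum.inr.inj h1; exact ⟨t', rfl, h⟩

/-- The subgraph of the tree consisting of the edges of class `c`. -/
def cg (c : Q td) : SimpleGraph td.T where
  Adj x y := ∃ h : td.tree.Adj x y, Quotient.mk (sd td) ⟨s(x,y), h⟩ = c
  symm := by
    constructor; rintro x y ⟨h, hc⟩
    refine ⟨h.symm, ?_⟩
    rw [← hc]
    congr 1
    exact Subtype.ext (Sym2.eq_swap)
  loopless := by constructor; rintro x ⟨h, -⟩; exact h.ne rfl

lemma cg_le (c : Q td) {x y} (h : (cg td c).Adj x y) : td.tree.Adj x y := h.1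

lemma edge_step (e : td.tree.edgeSet) {a b : td.T} (ha : a ∈ (e : Sym2 td.T))
    (hb : b ∈ (e : Sym2 td.T)) : (cg td (Quotient.mk (sd td) e)).Reachable a b := by
  obtain ⟨z, hz⟩ := e
  induction z with
  | _ x y =>
    rcases eq_or_ne a b with rfl | hne
    · exact Reachable.refl a
    · have hs : s(a, b) = s(x, y) := by
        rw [Sym2.mem_iff] at ha hb
        rcases ha with rfl | rfl <;> rcases hb with rfl | rfl
        · exact absurd rfl hne
        · rfl
        · exact Sym2.eq_swap
        · exact absurd rfl hne
      have hadj : td.tree.Adj a b := by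
        rw [← SimpleGraph.mem_edgeSet, hs]; exact hz
      refine SimpleGraph.Adj.reachable ⟨hadj, ?_⟩
      congr 1
      exact Subtype.ext hs

lemma sym2_exists_mem {α : Type*} (z : Sym2 α) : ∃ x, x ∈ z := by
  induction z with
  | _ x y => exact ⟨x, Sym2.mem_mk_left x y⟩
lemma class_eq_of_eqvGen {e f : td.tree.edgeSet} (h : EqvGen (R td) e f) :
    Quotient.mk (sd td) e = Quotient.mk (sd td) f := Quotient.sound h

lemma reach_in_class {e f : td.tree.edgeSet} (h : EqvGen (R td) e f) :
    ∀ {a b : td.T}, a ∈ (e : Sym2 td.T) → b ∈ (f : Sym2 td.T) →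
      (cg td (Quotient.mk (sd td) e)).Reachable a b := by
  induction h with
  | rel e f hR =>
    intro a b ha hb
    have hef := class_eq_of_eqvGen td (EqvGen.rel _ _ hR)
    obtain ⟨-, x, hxe, hxf⟩ := hR
    refine (edge_step td e ha hxe).trans ?_
    rw [hef]
    exact edge_step td f hxf hb
  | refl e => exact fun ha hb => edge_step td e ha hb
  | symm e f h ih =>
    intro a b ha hb
    have hef := class_eq_of_eqvGen td h
    rw [← hef]
    exact (ih hb ha).symm
  | trans e f g h1 h2 ih1 ih2 =>
    intro a b ha hb
    obtain ⟨x, hx⟩ := sym2_exists_mem (f : Sym2 td.T)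
    refine (ih1 ha hx).trans ?_
    have hef := class_eq_of_eqvGen td h1
    rw [hef]
    exact ih2 hx hb

lemma reach_of_incid {t u : td.T} {c : Q td} (ht : incid td t c) (hu : incid td u c) :
    (cg td c).Reachable t u := by
  obtain ⟨e, rfl, he⟩ := ht
  obtain ⟨f, hf, hf'⟩ := hu
  exact reach_in_class td (Quotient.exact hf.symm) he hf'

lemma cg_edge_class {c : Q td} {f : Sym2 td.T} (hf : f ∈ (cg td c).edgeSet)
    (hf' : f ∈ td.tree.edgeSet) : Quotient.mk (sd td) ⟨f, hf'⟩ = c := by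
  induction f with
  | _ x y =>
    obtain ⟨h, hc⟩ := hf
    exact hc
/-- Every edge on the (unique) path between two nodes incident to class `c`
belongs to class `c`. -/
lemma path_edge_class {t u : td.T} {c : Q td} (ht : incid td t c) (hu : incid td u c)
    (p : td.tree.Walk t u) (hp : p.IsPath) :
    ∀ e : td.tree.edgeSet, (e : Sym2 td.T) ∈ p.edges → Quotient.mk (sd td) e = c := by
  classical
  obtain ⟨w⟩ := reach_of_incid td ht hu
  have hsub : ∀ f ∈ w.edges, f ∈ td.tree.edgeSet := by
    intro f hf
    have h2 := w.edges_subset_edgeSet hf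
    induction f with
    | _ x y => exact h2.1
  have hpeq : p = (w.transfer td.tree hsub).bypass :=
    (td.isTree.existsUnique_path t u).unique hp (w.transfer td.tree hsub).bypass_isPath
  intro e he
  have he2 : (e : Sym2 td.T) ∈ w.edges := by
    have h3 := (w.transfer td.tree hsub).edges_bypass_subset (hpeq ▸ he)
    rwa [Walk.edges_transfer] at h3
  have h4 := w.edges_subset_edgeSet he2
  obtain ⟨z, hz⟩ := e
  exact cg_edge_class td h4 hz

/-- Separator property: bags along a path contain the common vertices of the endpoint bags. -/
lemma bag_path (v : V) {t1 t2 : td.T} (h1 : v ∈ td.bag t1) (h2 : v ∈ td.bag t2)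
    (p : td.tree.Walk t1 t2) (hp : p.IsPath) : ∀ x ∈ p.support, v ∈ td.bag x := by
  classical
  obtain ⟨w0⟩ := (td.bag_connected v) ⟨t1, h1⟩ ⟨t2, h2⟩
  have hsup : ∀ x ∈ (w0.map (SimpleGraph.Embedding.induce {t | v ∈ td.bag t}).toHom).support,
      v ∈ td.bag x := by
    intro x hx
    rw [Walk.support_map, List.mem_map] at hx
    obtain ⟨y, -, rfl⟩ := hx
    exact y.2
  have hpeq : p = (w0.map (SimpleGraph.Embedding.induce {t | v ∈ td.bag t}).toHom).bypass :=
    (td.isTree.existsUnique_path t1 t2).unique hp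
      (Walk.bypass_isPath _)
  intro x hx
  exact hsup x (Walk.support_bypass_subset _ (hpeq ▸ hx))
lemma incid_left {x y : td.T} (h : td.tree.Adj x y) :
    incid td x (Quotient.mk (sd td) ⟨s(x,y), h⟩) :=
  ⟨⟨s(x,y), h⟩, rfl, Sym2.mem_mk_left x y⟩

lemma incid_right {x y : td.T} (h : td.tree.Adj x y) :
    incid td y (Quotient.mk (sd td) ⟨s(x,y), h⟩) :=
  ⟨⟨s(x,y), h⟩, rfl, Sym2.mem_mk_right x y⟩

/-- From two nodes incident to a class, a walk in the original tree all of whose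
edges lie in that class. -/
lemma class_walk {t u : td.T} {c : Q td} (ht : incid td t c) (hu : incid td u c) :
    ∃ Pi : td.tree.Walk t u, ∀ e : td.tree.edgeSet, (e : Sym2 td.T) ∈ Pi.edges →
      Quotient.mk (sd td) e = c := by
  obtain ⟨w⟩ := reach_of_incid td ht hu
  have hsub : ∀ f ∈ w.edges, f ∈ td.tree.edgeSet := by
    intro f hf
    have h2 := w.edges_subset_edgeSet hf
    induction f with
    | _ x y => exact h2.1
  refine ⟨w.transfer td.tree hsub, ?_⟩
  intro e he
  rw [Walk.edges_transfer] at he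
  have h4 := w.edges_subset_edgeSet he
  obtain ⟨z, hz⟩ := e
  exact cg_edge_class td h4 hz

lemma tree'_reach_inl {t u : td.T} (h : td.tree.Reachable t u) :
    (tree' td).Reachable (.inl t) (.inl u) := by
  obtain ⟨w⟩ := h
  induction w with
  | nil => exact Reachable.refl _
  | cons hadj w ih =>
    rename_i x y z
    refine Reachable.trans ?_ ih
    exact ((tree'_adj_inl_inr td).mpr (incid_left td hadj)).reachable.trans
      (((tree'_adj_inl_inr td).mpr (incid_right td hadj)).symm.reachable)

lemma tree'_connected : (tree' td).Connected := by
  have hT := td.isTree.isConnected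
  have hne : Nonempty td.T := hT.nonempty
  constructor
  · rintro (t | c) (u | d)
    · exact tree'_reach_inl td (hT t u)
    · obtain ⟨e, rfl⟩ := Quotient.exists_rep d
      obtain ⟨x, hx⟩ := sym2_exists_mem (e : Sym2 td.T)
      exact (tree'_reach_inl td (hT t x)).trans
        ((tree'_adj_inl_inr td).mpr ⟨e, rfl, hx⟩).reachable
    · obtain ⟨e, rfl⟩ := Quotient.exists_rep c
      obtain ⟨x, hx⟩ := sym2_exists_mem (e : Sym2 td.T)
      exact ((tree'_adj_inl_inr td).mpr ⟨e, rfl, hx⟩).symm.reachable.trans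
        (tree'_reach_inl td (hT x u))
    · obtain ⟨e, rfl⟩ := Quotient.exists_rep c
      obtain ⟨f, rfl⟩ := Quotient.exists_rep d
      obtain ⟨x, hx⟩ := sym2_exists_mem (e : Sym2 td.T)
      obtain ⟨y, hy⟩ := sym2_exists_mem (f : Sym2 td.T)
      exact ((tree'_adj_inl_inr td).mpr ⟨e, rfl, hx⟩).symm.reachable.trans
        ((tree'_reach_inl td (hT x y)).trans
          ((tree'_adj_inl_inr td).mpr ⟨f, rfl, hy⟩).reachable)

/-- From a walk in the new graph avoiding the class node `c0`, a walk in the original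
tree avoiding all edges of class `c0`. -/
lemma walk_avoid {c0 : Q td} : ∀ (n : ℕ) {x y : td.T ⊕ Q td} (W : (tree' td).Walk x y),
    W.length = n → (Sum.inr c0 : td.T ⊕ Q td) ∉ W.support →
    ∀ a b : td.T, x = .inl a → y = .inl b →
    ∃ Pi : td.tree.Walk a b, ∀ e : td.tree.edgeSet, (e : Sym2 td.T) ∈ Pi.edges →
      Quotient.mk (sd td) e ≠ c0 := by
  intro n
  induction n using Nat.strong_induction_on with
  | _ n ih =>
    intro x y W hlen hav a b hx hy
    cases W with
    | nil =>
      subst hx; obtain rfl := Sum.inl.inj hy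
      exact ⟨Walk.nil, by simp⟩
    | cons h W1 =>
      subst hx hy
      obtain ⟨c, rfl, hic⟩ := tree'_adj_inl td h
      have hcne : c ≠ c0 := by
        rintro rfl
        exact hav (by simp [Walk.support_cons])
      cases W1 with
      | cons h1 W2 =>
        obtain ⟨a', rfl, hic'⟩ := tree'_adj_inr td h1
        obtain ⟨Pi1, hPi1⟩ := class_walk td hic hic'
        have hlen2 : W2.length < n := by
          subst hlen; simp [Walk.length_cons]
        have hav2 : (Sum.inr c0 : td.T ⊕ Q td) ∉ W2.support := by
          intro hmem
          exact hav (by simp [Walk.support_cons]; tauto)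
        obtain ⟨Pi2, hPi2⟩ := ih W2.length hlen2 W2 rfl hav2 a' b rfl rfl
        refine ⟨Pi1.append Pi2, ?_⟩
        intro e he
        rw [Walk.edges_append, List.mem_append] at he
        rcases he with he | he
        · rw [hPi1 e he]; exact hcne
        · exact hPi2 e he
lemma no_cycle_at_inl (t0 : td.T) (W : (tree' td).Walk (.inl t0) (.inl t0)) :
    ¬ W.IsCycle := by
  classical
  intro hW
  cases W with
  | nil => exact hW.ne_nil rfl
  | cons h W1 =>
    obtain ⟨c0, rfl, hic0⟩ := tree'_adj_inl td h
    cases W1 with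
    | cons h1 W2 =>
      obtain ⟨t1, rfl, hic1⟩ := tree'_adj_inr td h1
      -- support facts
      have hnd : ((Walk.cons h (Walk.cons h1 W2)).support).tail.Nodup := hW.2
      rw [Walk.support_cons, List.tail_cons, Walk.support_cons] at hnd
      have hc0nm : (Sum.inr c0 : td.T ⊕ Q td) ∉ W2.support := (List.nodup_cons.mp hnd).1
      have hndW2 : W2.support.Nodup := (List.nodup_cons.mp hnd).2
      -- t0 ≠ t1
      have hne : t0 ≠ t1 := by
        rintro rfl
        cases W2 with
        | nil =>
          have := hW.three_le_length
          simp [Walk.length_cons] at this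
        | cons h2 W3 =>
          rw [Walk.support_cons, List.nodup_cons] at hndW2
          exact hndW2.1 (Walk.end_mem_support W3)
      -- unique path from t0 to t1, its edges are of class c0
      obtain ⟨p, hp, -⟩ := td.isTree.existsUnique_path t0 t1
      have hpedge := path_edge_class td hic0 hic1 p hp
      obtain ⟨z, hadj, p', rfl⟩ := Walk.exists_eq_cons_of_ne hne p
      -- the walk avoiding class c0
      obtain ⟨Pi, hPi⟩ := walk_avoid td W2.length W2 rfl hc0nm t1 t0 rfl rfl
      -- bridge property
      have hbr : td.tree.IsBridge s(t0, z) :=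
        (isAcyclic_iff_forall_adj_isBridge.mp td.isTree.IsAcyclic) hadj
      rw [isBridge_iff_adj_and_forall_walk_mem_edges] at hbr
      have hmem := hbr (p'.append Pi).reverse
      rw [Walk.edges_reverse, List.mem_reverse, Walk.edges_append, List.mem_append] at hmem
      rcases hmem with hmem | hmem
      · have := hp.edges_nodup
        rw [Walk.edges_cons, List.nodup_cons] at this
        exact this.1 hmem
      · have hcl := hpedge ⟨s(t0,z), hadj⟩ (by rw [Walk.edges_cons]; exact List.mem_cons_self)
        exact hPi ⟨s(t0,z), hadj⟩ hmem hcl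

lemma tree'_acyclic : (tree' td).IsAcyclic := by
  classical
  rintro (t | c) W hW
  · exact no_cycle_at_inl td t W hW
  · cases W with
    | nil => exact hW.ne_nil rfl
    | cons h W1 =>
      obtain ⟨t, rfl, -⟩ := tree'_adj_inr td h
      have hmem : (Sum.inl t : td.T ⊕ Q td) ∈ (Walk.cons h W1).support := by
        rw [Walk.support_cons]; exact List.mem_cons_of_mem _ (Walk.start_mem_support W1)
      exact no_cycle_at_inl td t _ (hW.rotate hmem)

lemma tree'_isTree : (tree' td).IsTree := ⟨tree'_connected td, tree'_acyclic td⟩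
/-- Bags of the new decomposition. -/
def bag' : td.T ⊕ Q td → Set V := Sum.elim td.bag (Sbar td)

lemma Sbar_mk (e : td.tree.edgeSet) : Sbar td (Quotient.mk (sd td) e) = S td e := rfl

lemma induce_reachable {W' : Type*} {H : SimpleGraph W'} {M : Set W'} {x y : W'}
    (w : H.Walk x y) (hs : ∀ z ∈ w.support, z ∈ M) (hx : x ∈ M) (hy : y ∈ M) :
    (H.induce M).Reachable ⟨x, hx⟩ ⟨y, hy⟩ := by
  induction w with
  | nil => exact Reachable.refl _
  | cons hadj w ih =>
    rename_i a b c
    have hb : b ∈ M := hs b (by rw [Walk.support_cons]; exact List.mem_cons_of_mem _ w.start_mem_support)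
    refine Reachable.trans (SimpleGraph.Adj.reachable ?_) (ih ?_ hb hy)
    · exact hadj
    · intro z hz; exact hs z (by rw [Walk.support_cons]; exact List.mem_cons_of_mem _ hz)

lemma exists_walk_in_bags (v : V) {t u : td.T} (ht : v ∈ td.bag t) (hu : v ∈ td.bag u) :
    ∃ w : td.tree.Walk t u, ∀ x ∈ w.support, v ∈ td.bag x := by
  obtain ⟨w0⟩ := (td.bag_connected v) ⟨t, ht⟩ ⟨u, hu⟩
  refine ⟨w0.map (SimpleGraph.Embedding.induce {t | v ∈ td.bag t}).toHom, ?_⟩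
  intro x hx
  replace hx : x ∈ (w0.map (SimpleGraph.Embedding.induce {t | v ∈ td.bag t}).toHom).support := hx
  rw [Walk.support_map, List.mem_map] at hx
  obtain ⟨y, -, rfl⟩ := hx
  exact y.2

lemma reach_inl_aux (v : V) {t u : td.T} (w : td.tree.Walk t u)
    (hs : ∀ x ∈ w.support, v ∈ td.bag x) (ht : v ∈ bag' td (.inl t)) (hu : v ∈ bag' td (.inl u)) :
    ((tree' td).induce {x | v ∈ bag' td x}).Reachable ⟨.inl t, ht⟩ ⟨.inl u, hu⟩ := by
  induction w with
  | nil => exact Reachable.refl _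
  | cons hadj w ih =>
    rename_i a b c
    have hb : v ∈ td.bag b := hs b (by rw [Walk.support_cons]; exact List.mem_cons_of_mem _ w.start_mem_support)
    have ha : v ∈ td.bag a := hs a (by rw [Walk.support_cons]; exact List.mem_cons_self)
    have hS : v ∈ S td ⟨s(a, b), hadj⟩ := by
      intro x hx
      rw [Sym2.mem_iff] at hx
      rcases hx with rfl | rfl
      · exact ha
      · exact hb
    have hc : (Sum.inr (Quotient.mk (sd td) ⟨s(a, b), hadj⟩) : td.T ⊕ Q td) ∈
        {x | v ∈ bag' td x} := hS
    refine Reachable.trans (SimpleGraph.Adj.reachable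
        (?_ : ((tree' td).induce _).Adj ⟨.inl a, ht⟩ ⟨.inr _, hc⟩)) ?_
    · exact (tree'_adj_inl_inr td).mpr (incid_left td hadj)
    refine Reachable.trans (SimpleGraph.Adj.reachable
        (?_ : ((tree' td).induce _).Adj ⟨.inr _, hc⟩ ⟨.inl b, hb⟩)) ?_
    · exact ((tree'_adj_inl_inr td).mpr (incid_right td hadj)).symm
    exact ih (fun x hx => hs x (by rw [Walk.support_cons]; exact List.mem_cons_of_mem _ hx)) hb hu

lemma bag'_connected (v : V) : ((tree' td).induce {x | v ∈ bag' td x}).Connected := by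
  have hne : Nonempty {t | v ∈ td.bag t} := (td.bag_connected v).nonempty
  obtain ⟨t0, ht0⟩ := hne
  refine (connected_iff _).mpr ⟨?_, ⟨⟨.inl t0, ht0⟩⟩⟩
  · -- Preconnected
    have key : ∀ (x : td.T ⊕ Q td) (hx : v ∈ bag' td x),
        ∃ (t : td.T) (ht : v ∈ bag' td (.inl t)),
          ((tree' td).induce {x | v ∈ bag' td x}).Reachable ⟨x, hx⟩ ⟨.inl t, ht⟩ := by
      rintro (t | c) hx
      · exact ⟨t, hx, Reachable.refl _⟩
      · obtain ⟨e, rfl⟩ := Quotient.exists_rep c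
        obtain ⟨x0, hx0⟩ := sym2_exists_mem (e : Sym2 td.T)
        have hb : v ∈ td.bag x0 := hx x0 hx0
        refine ⟨x0, hb, SimpleGraph.Adj.reachable ?_⟩
        exact ((tree'_adj_inl_inr td).mpr ⟨e, rfl, hx0⟩).symm
    rintro ⟨x, hx⟩ ⟨y, hy⟩
    obtain ⟨t, ht, hrx⟩ := key x hx
    obtain ⟨u, hu, hry⟩ := key y hy
    obtain ⟨w, hw⟩ := exists_walk_in_bags td v ht hu
    exact hrx.trans ((reach_inl_aux td v w hw ht hu).trans hry.symm)

/-- The segmented tree decomposition. -/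
noncomputable def td' : G.TreeDecomp where
  T := td.T ⊕ Q td
  finite := by
    haveI := td.finite
    haveI : Finite (Q td) := Quotient.finite _
    infer_instance
  tree := tree' td
  isTree := tree'_isTree td
  bag := bag' td
  bag_connected := bag'_connected td
  bag_cover := by
    intro v w h
    obtain ⟨t, h1, h2⟩ := td.bag_cover h
    exact ⟨.inl t, h1, h2⟩
lemma Sbar_subset_bag {c : Q td} {t : td.T} (h : incid td t c) : Sbar td c ⊆ td.bag t := by
  obtain ⟨e, rfl, ht⟩ := h
  exact fun v hv => hv t ht

lemma exists_two_mem (e : td.tree.edgeSet) :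
    ∃ x y : td.T, x ≠ y ∧ x ∈ (e : Sym2 td.T) ∧ y ∈ (e : Sym2 td.T) := by
  obtain ⟨z, hz⟩ := e
  induction z with
  | _ x y => exact ⟨x, y, (hz : td.tree.Adj x y).ne, Sym2.mem_mk_left x y, Sym2.mem_mk_right x y⟩

lemma prop2 {c : Q td} {t1 t2 : td.T} (h1 : incid td t1 c) (h2 : incid td t2 c)
    (hne : t1 ≠ t2) : Sbar td c = td.bag t1 ∩ td.bag t2 := by
  ext v
  constructor
  · intro hv
    exact ⟨Sbar_subset_bag td h1 hv, Sbar_subset_bag td h2 hv⟩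
  · rintro ⟨hv1, hv2⟩
    obtain ⟨p, hp, -⟩ := td.isTree.existsUnique_path t1 t2
    obtain ⟨z, hadj, p', rfl⟩ := Walk.exists_eq_cons_of_ne hne p
    have hz : v ∈ td.bag z := by
      refine bag_path td v hv1 hv2 _ hp z ?_
      rw [Walk.support_cons]
      exact List.mem_cons_of_mem _ p'.start_mem_support
    have hcl := path_edge_class td h1 h2 _ hp ⟨s(t1, z), hadj⟩
      (by rw [Walk.edges_cons]; exact List.mem_cons_self)
    rw [← hcl, Sbar_mk]
    intro x hx
    rw [Sym2.mem_iff] at hx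
    rcases hx with rfl | rfl
    · exact hv1
    · exact hz

lemma prop3 {t : td.T} {c1 c2 : Q td} (h1 : incid td t c1) (h2 : incid td t c2)
    (hne : c1 ≠ c2) : td.bag t ∩ Sbar td c1 ≠ td.bag t ∩ Sbar td c2 := by
  intro heq
  obtain ⟨e1, rfl, ht1⟩ := h1
  obtain ⟨e2, rfl, ht2⟩ := h2
  rw [Sbar_mk, Sbar_mk] at heq
  have hs1 : td.bag t ∩ S td e1 = S td e1 :=
    Set.inter_eq_self_of_subset_right (fun v hv => hv t ht1)
  have hs2 : td.bag t ∩ S td e2 = S td e2 :=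
    Set.inter_eq_self_of_subset_right (fun v hv => hv t ht2)
  rw [hs1, hs2] at heq
  exact hne (Quotient.sound (EqvGen.rel _ _ ⟨heq, t, ht1, ht2⟩))

end Seg

/-- Every tree decomposition of a finite graph can be turned into a segmented one:
the nodes split into a-nodes `Va` and b-nodes `Vb` such that (1) every tree edge joins an
a-node and a b-node, (2) at a-nodes the bag equals the intersection of the bags of any two
distinct neighbors, (3) at b-nodes distinct neighbors give distinct bag intersections,
(4) nodes of degree at most 1 are b-nodes; moreover every new bag is contained in an old bag. -/
theorem exists_segmented_treeDecomp {V : Type} [Fintype V] (G : SimpleGraph V)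
    (td : G.TreeDecomp) :
    ∃ (td' : G.TreeDecomp) (Va Vb : Set td'.T),
      Va ∪ Vb = Set.univ ∧ Disjoint Va Vb ∧
      (∀ ⦃t u⦄, td'.tree.Adj t u → (t ∈ Va ∧ u ∈ Vb) ∨ (t ∈ Vb ∧ u ∈ Va)) ∧
      (∀ t ∈ Va, ∀ u₁ u₂, td'.tree.Adj t u₁ → td'.tree.Adj t u₂ → u₁ ≠ u₂ →
        td'.bag t = td'.bag u₁ ∩ td'.bag u₂) ∧
      (∀ t ∈ Vb, ∀ u₁ u₂, td'.tree.Adj t u₁ → td'.tree.Adj t u₂ → u₁ ≠ u₂ →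
        td'.bag t ∩ td'.bag u₁ ≠ td'.bag t ∩ td'.bag u₂) ∧
      (∀ t, (td'.tree.neighborSet t).ncard ≤ 1 → t ∈ Vb) ∧
      (∀ t, ∃ s, td'.bag t ⊆ td.bag s) := by
  classical
  haveI := td.finite
  haveI : Finite (Seg.Q td) := Quotient.finite _
  refine ⟨Seg.td' td, Set.range Sum.inr, Set.range Sum.inl, ?_, ?_, ?_, ?_, ?_, ?_, ?_⟩
  · ext x
    rcases x with t | c <;> [exact iff_of_true (Or.inr ⟨t, rfl⟩) (Set.mem_univ _); exact iff_of_true (Or.inl ⟨c, rfl⟩) (Set.mem_univ _)]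
  · rw [Set.disjoint_left]
    rintro x ⟨c, rfl⟩ ⟨t, h⟩
    exact absurd h (by simp)
  · rintro t u (⟨t', c', rfl, rfl, h⟩ | ⟨t', c', rfl, rfl, h⟩)
    · exact Or.inr ⟨⟨t', rfl⟩, ⟨c', rfl⟩⟩
    · exact Or.inl ⟨⟨c', rfl⟩, ⟨t', rfl⟩⟩
  · rintro t ⟨c, rfl⟩ u₁ u₂ h1 h2 hne
    obtain ⟨t1, rfl, hi1⟩ := Seg.tree'_adj_inr td h1
    obtain ⟨t2, rfl, hi2⟩ := Seg.tree'_adj_inr td h2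
    have hne' : t1 ≠ t2 := fun h => hne (congrArg Sum.inl h)
    exact Seg.prop2 td hi1 hi2 hne'
  · rintro t ⟨t0, rfl⟩ u₁ u₂ h1 h2 hne
    obtain ⟨c1, rfl, hi1⟩ := Seg.tree'_adj_inl td h1
    obtain ⟨c2, rfl, hi2⟩ := Seg.tree'_adj_inl td h2
    have hne' : c1 ≠ c2 := fun h => hne (congrArg Sum.inr h)
    exact Seg.prop3 td hi1 hi2 hne'
  · rintro (t | c) hdeg
    · exact ⟨t, rfl⟩
    · exfalso
      obtain ⟨e, rfl⟩ := Quotient.exists_rep c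
      obtain ⟨x, y, hxy, hx, hy⟩ := Seg.exists_two_mem td e
      have hsub : ({Sum.inl x, Sum.inl y} : Set (td.T ⊕ Seg.Q td)) ⊆
          (Seg.tree' td).neighborSet (Sum.inr (Quotient.mk (Seg.sd td) e)) := by
        rintro z (rfl | rfl)
        · exact ((Seg.tree'_adj_inl_inr td).mpr ⟨e, rfl, hx⟩).symm
        · exact ((Seg.tree'_adj_inl_inr td).mpr ⟨e, rfl, hy⟩).symm
      have h2 : ({Sum.inl x, Sum.inl y} : Set (td.T ⊕ Seg.Q td)).ncard = 2 :=
        Set.ncard_pair (fun h => hxy (Sum.inl.inj h))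
      have hle := Set.ncard_le_ncard hsub (Set.toFinite _)
      rw [h2] at hle
      have hdeg' : ((Seg.tree' td).neighborSet (Sum.inr (Quotient.mk (Seg.sd td) e))).ncard ≤ 1 :=
        hdeg
      omega
  · rintro (t | c)
    · exact ⟨t, subset_rfl⟩
    · obtain ⟨e, rfl⟩ := Quotient.exists_rep c
      obtain ⟨x, y, hxy, hx, hy⟩ := Seg.exists_two_mem td e
      exact ⟨x, fun v hv => hv x hx⟩
end

section
/- Let k ∈ ℕ, let G be a finite graph, and let (T, β) be a tree decomposition of G in which every bag has size at most k + 1. If u and v are distinct vertices of G such that there exist k + 1 pairwise internally disjoint u–v paths in G, then there is a node t of T with u ∈ β(t) and v ∈ β(t). -/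
open SimpleGraph

section TreeHelpers

variable {T : Type*} {tree : SimpleGraph T} {t1 t2 : T}

lemma side_aux : ∀ {a b : T} (_ : tree.Walk a b),
    ((tree.deleteEdges {s(t1,t2)}).Reachable b t1 ∨ (tree.deleteEdges {s(t1,t2)}).Reachable b t2) →
    ((tree.deleteEdges {s(t1,t2)}).Reachable a t1 ∨ (tree.deleteEdges {s(t1,t2)}).Reachable a t2) := by
  intro a b w
  induction w with
  | nil => exact id
  | @cons x y z h p ih =>
    intro hb
    by_cases he : s(x, y) = s(t1, t2)
    · rcases Sym2.eq_iff.mp he with ⟨rfl, rfl⟩ | ⟨rfl, rfl⟩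
      · exact Or.inl (Reachable.refl _)
      · exact Or.inr (Reachable.refl _)
    · have hadj : (tree.deleteEdges {s(t1,t2)}).Adj x y := by
        simp only [deleteEdges_adj, Set.mem_singleton_iff]
        exact ⟨h, he⟩
      exact (ih hb).imp (hadj.reachable.trans) (hadj.reachable.trans)

lemma cross_aux (hbr : ¬ (tree.deleteEdges {s(t1,t2)}).Reachable t1 t2) :
    ∀ {a b : T} (w : tree.Walk a b),
    (tree.deleteEdges {s(t1,t2)}).Reachable a t1 →
    (tree.deleteEdges {s(t1,t2)}).Reachable b t2 → t1 ∈ w.support := by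
  intro a b w
  induction w with
  | nil => intro ha hb; exact absurd (ha.symm.trans hb) hbr
  | @cons x y z h p ih =>
    intro ha hb
    by_cases he : s(x, y) = s(t1, t2)
    · rcases Sym2.eq_iff.mp he with ⟨rfl, rfl⟩ | ⟨rfl, rfl⟩
      · exact Walk.start_mem_support _
      · exact (hbr ha.symm).elim
    · have hadj : (tree.deleteEdges {s(t1,t2)}).Adj x y := by
        simp only [deleteEdges_adj, Set.mem_singleton_iff]
        exact ⟨h, he⟩
      have := ih (hadj.symm.reachable.trans ha) hb
      simp [Walk.support_cons, this]

/-- Find a separating edge along a tree path from a `u`-bag to a `v`-bag. -/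
lemma find_edge_aux {V : Type*} {bag : T → Set V} {u v : V}
    (hnc : ¬ ∃ t, u ∈ bag t ∧ v ∈ bag t) :
    ∀ {a tv : T} (w : tree.Walk a tv), w.IsPath → u ∈ bag a → v ∈ bag tv →
    ∃ s1 s2, tree.Adj s1 s2 ∧ u ∈ bag s1 ∧ u ∉ bag s2 ∧
      (tree.deleteEdges {s(s1,s2)}).Reachable s2 tv := by
  intro a tv w
  induction w with
  | nil => intro _ hu hv; exact (hnc ⟨_, hu, hv⟩).elim
  | @cons x y z h p ih =>
    intro hp hu hv
    rw [Walk.cons_isPath_iff] at hp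
    by_cases hc : u ∈ bag y
    · exact ih hp.1 hc hv
    · refine ⟨x, y, h, hu, hc, ?_⟩
      have hne : ∀ e ∈ p.edges, e ∉ ({s(x,y)} : Set (Sym2 T)) := by
        intro e he hmem
        rw [Set.mem_singleton_iff] at hmem
        subst hmem
        exact hp.2 (p.fst_mem_support_of_mem_edges he)
      exact ⟨p.toDeleteEdges _ hne⟩

end TreeHelpers

/-- If `(T, β)` is a tree decomposition of `G` with all bags of size at most
`k + 1`, and `u ≠ v` are joined by `k + 1` pairwise internally disjoint paths in `G`, then
`u` and `v` lie in a common bag. -/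
theorem mem_common_bag_of_internallyDisjointPaths {V : Type} [Fintype V] (k : ℕ)
    (G : SimpleGraph V) (td : G.TreeDecomp) (hbag : ∀ t, (td.bag t).ncard ≤ k + 1)
    (u v : V) (huv : u ≠ v) (hpaths : InternallyDisjointPaths G u v (k + 1)) :
    ∃ t, u ∈ td.bag t ∧ v ∈ td.bag t := by
  classical
  by_contra hnc
  obtain ⟨P, hPinj, hPdisj⟩ := hpaths
  obtain ⟨⟨tv, htv⟩⟩ := (td.bag_connected v).nonempty
  obtain ⟨⟨tu, htu⟩⟩ := (td.bag_connected u).nonempty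
  obtain ⟨w0⟩ := td.isTree.isConnected.preconnected tu tv
  obtain ⟨t1, t2, hadj, hu1, hu2, hreach2⟩ :=
    find_edge_aux hnc w0.toPath.1 w0.toPath.2 htu htv
  set Gd := td.tree.deleteEdges {s(t1,t2)} with hGd
  have hbr : ¬ Gd.Reachable t1 t2 := by
    have hb := (isAcyclic_iff_forall_adj_isBridge.mp td.isTree.IsAcyclic) hadj
    exact isBridge_iff.mp hb
  have side : ∀ t : td.T, Gd.Reachable t t1 ∨ Gd.Reachable t t2 := by
    intro t
    obtain ⟨w⟩ := td.isTree.isConnected.preconnected t t1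
    exact side_aux w (Or.inl (Reachable.refl _))
  have bagB : ∀ (x : V) (s s' : td.T), x ∈ td.bag s → Gd.Reachable s t1 →
      x ∈ td.bag s' → Gd.Reachable s' t2 → x ∈ td.bag t1 ∧ x ∈ td.bag t2 := by
    intro x s s' hxs hrs hxs' hrs'
    obtain ⟨w'⟩ := (td.bag_connected x).preconnected ⟨s, hxs⟩ ⟨s', hxs'⟩
    let f : (td.tree.induce {t | x ∈ td.bag t}) →g td.tree := ⟨Subtype.val, fun h => h⟩
    have hm : ∀ t ∈ (w'.map f).support, x ∈ td.bag t := by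
      intro t ht
      rw [Walk.support_map, List.mem_map] at ht
      obtain ⟨⟨t', ht'⟩, _, rfl⟩ := ht
      exact ht'
    refine ⟨hm t1 (cross_aux hbr (w'.map f) hrs hrs'), ?_⟩
    have hswap : td.tree.deleteEdges {s(t2,t1)} = Gd := by rw [Sym2.eq_swap]
    have hbr' : ¬ (td.tree.deleteEdges {s(t2,t1)}).Reachable t2 t1 := by
      rw [hswap]; exact fun h => hbr h.symm
    have h2 := cross_aux hbr' ((w'.map f).reverse)
      (by rw [hswap]; exact hrs') (by rw [hswap]; exact hrs)
    rw [Walk.support_reverse, List.mem_reverse] at h2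
    exact hm t2 h2
  have walkkey : ∀ {a b : V} (w : G.Walk a b),
      (∃ t, a ∈ td.bag t ∧ Gd.Reachable t t1) →
      (∃ t', b ∈ td.bag t' ∧ Gd.Reachable t' t2) →
      ∃ x ∈ w.support, x ∈ td.bag t1 ∧ x ∈ td.bag t2 := by
    intro a b w
    induction w with
    | nil =>
      rintro ⟨t, hat, hr⟩ ⟨t', hbt', hr'⟩
      exact ⟨_, Walk.start_mem_support _, bagB _ t t' hat hr hbt' hr'⟩
    | @cons x y z h p ih =>
      rintro ⟨t, hat, hr⟩ hb
      obtain ⟨t0, hxt0, hyt0⟩ := td.bag_cover h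
      rcases side t0 with h1 | h2
      · obtain ⟨x', hx's, hx'⟩ := ih ⟨t0, hyt0, h1⟩ hb
        exact ⟨x', by simp [hx's], hx'⟩
      · exact ⟨x, by simp, bagB x t t0 hat hr hxt0 h2⟩
  have key : ∀ i : Fin (k+1), ∃ x ∈ (P i).1.support, x ∈ td.bag t1 ∧ x ∈ td.bag t2 :=
    fun i => walkkey (P i).1 ⟨t1, hu1, Reachable.refl _⟩ ⟨tv, htv, hreach2.symm⟩
  choose x hxs hx1 hx2 using key
  have hxu : ∀ i, x i ≠ u := fun i h => hu2 (h ▸ hx2 i)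
  have hxv : ∀ i, x i ≠ v := fun i h => hnc ⟨t1, hu1, h ▸ hx1 i⟩
  have hxinj : Function.Injective x := by
    intro i j hij
    by_contra hne
    rcases hPdisj i j hne (x i) (hxs i) (hij ▸ hxs j) with h | h
    · exact hxu i h
    · exact hxv i h
  have hsub : insert u (Set.range x) ⊆ td.bag t1 := by
    rintro y hy
    rcases Set.mem_insert_iff.mp hy with rfl | ⟨i, rfl⟩
    · exact hu1
    · exact hx1 i
  have hcard : (insert u (Set.range x)).ncard = k + 2 := by
    rw [Set.ncard_insert_of_notMem (by rintro ⟨i, hi⟩; exact hxu i hi) (Set.toFinite _)]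
    have : Set.range x = x '' Set.univ := (Set.image_univ).symm
    rw [this, Set.ncard_image_of_injective _ hxinj, Set.ncard_univ]
    simp
  have := Set.ncard_le_ncard hsub (Set.toFinite _)
  have := hbag t1
  omega
end

section
/- Let k ∈ ℕ and let G be a finite graph of tree width at most k. Let G' be the improved version of G with respect to k, i.e., the graph on V(G) whose edges are those of G together with an edge between every pair of distinct nonadjacent vertices of G joined by k + 1 pairwise internally disjoint paths in G. Then every tree decomposition of G of width at most k is also a tree decomposition of G'; in particular, the tree width of G' equals the tree width of G. -/
open SimpleGraph

section Improved

variable {V : Type*}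

lemma InternallyDisjointPaths.symm {G : SimpleGraph V} {u v : V} {m : ℕ}
    (h : InternallyDisjointPaths G u v m) : InternallyDisjointPaths G v u m := by
  obtain ⟨P, hinj, hdisj⟩ := h
  refine ⟨fun i => (P i).reverse, ?_, ?_⟩
  · intro i j hij
    apply hinj
    apply Subtype.ext
    have h1 : (P i).1.reverse = (P j).1.reverse := congrArg Subtype.val hij
    have h2 := congrArg SimpleGraph.Walk.reverse h1
    simpa [SimpleGraph.Walk.reverse_reverse] using h2
  · intro i j hij x hxi hxj
    have hxi' : x ∈ (P i).1.support := by
      have : x ∈ (P i).1.reverse.support := hxi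
      simpa [SimpleGraph.Walk.support_reverse] using this
    have hxj' : x ∈ (P j).1.support := by
      have : x ∈ (P j).1.reverse.support := hxj
      simpa [SimpleGraph.Walk.support_reverse] using this
    rcases hdisj i j hij x hxi' hxj' with h | h
    · exact Or.inr h
    · exact Or.inl h

/-- The improved version of `G` with respect to `k`: the graph on `V(G)` whose edges are those
of `G` together with an edge between every pair of distinct vertices joined by `k + 1` pairwise
internally disjoint paths in `G`. -/
def improvedGraph (G : SimpleGraph V) (k : ℕ) : SimpleGraph V where
  Adj u v := G.Adj u v ∨ (u ≠ v ∧ InternallyDisjointPaths G u v (k + 1))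
  symm := by
    constructor
    rintro u v (h | ⟨hne, h⟩)
    · exact Or.inl h.symm
    · exact Or.inr ⟨hne.symm, h.symm⟩
  loopless := by
    constructor
    rintro u (h | ⟨hne, _⟩)
    · exact G.irrefl h
    · exact hne rfl

/-- The tree width of `G`: the minimum width of a tree decomposition of `G`. -/
noncomputable def treewidth (G : SimpleGraph V) : ℕ :=
  sInf {k | G.HasTreeDecompWidthLE k}

end Improved

section AuxLemmas

variable {X : Type*} {H : SimpleGraph X}

lemma aux_walk_induction {R : X → Prop} (hR : ∀ a b, H.Adj a b → R a → R b) :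
    ∀ {x y : X} (_ : H.Walk x y), R x → R y := by
  intro x y p
  induction p with
  | nil => exact id
  | cons h _ ih => intro hx; exact ih (hR _ _ h hx)

lemma aux_exists_crossing {Pred : X → Prop} :
    ∀ {x y : X} (p : H.Walk x y), Pred x → ¬ Pred y →
      ∃ a b, H.Adj a b ∧ Pred a ∧ ¬ Pred b := by
  intro x y p
  induction p with
  | nil => intro hx hy; exact absurd hx hy
  | @cons x m y h p ih =>
    intro hx hy
    by_cases hm : Pred m
    · exact ih hm hy
    · exact ⟨_, _, h, hx, hm⟩

lemma aux_exists_first_exit {Pred : X → Prop} :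
    ∀ {x y : X} (_ : H.Walk x y), ¬ Pred x → Pred y →
      ∃ s' s, H.Adj s' s ∧ ¬ Pred s' ∧ Pred s ∧
        ∃ q : H.Walk x s', ∀ z ∈ q.support, ¬ Pred z := by
  intro x y p
  induction p with
  | nil => intro hx hy; exact absurd hy hx
  | @cons x m y h p ih =>
    intro hx hy
    by_cases hm : Pred m
    · exact ⟨x, m, h, hx, hm, SimpleGraph.Walk.nil, by simp [hx]⟩
    · obtain ⟨s', s, hadj, hs', hs, q, hq⟩ := ih hm hy
      refine ⟨s', s, hadj, hs', hs, SimpleGraph.Walk.cons h q, ?_⟩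
      intro z hz
      rw [SimpleGraph.Walk.support_cons, List.mem_cons] at hz
      rcases hz with rfl | hz
      · exact hx
      · exact hq z hz

end AuxLemmas


section KeyLemma

lemma improved_key {V : Type} [Fintype V] (k : ℕ) (G : SimpleGraph V)
    (td : G.TreeDecomp) (hwd : ∀ t, (td.bag t).ncard ≤ k + 1)
    {v w : V} (hadj : (improvedGraph G k).Adj v w) :
    ∃ t, v ∈ td.bag t ∧ w ∈ td.bag t := by
  rcases hadj with h | ⟨hne, hpaths⟩
  · exact td.bag_cover h
  by_contra hno
  push_neg at hno
  obtain ⟨⟨a, ha⟩⟩ := (td.bag_connected v).nonempty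
  obtain ⟨⟨b, hb⟩⟩ := (td.bag_connected w).nonempty
  have hbA : w ∈ td.bag b := hb
  have haA : v ∈ td.bag a := ha
  have hbnA : v ∉ td.bag b := fun hv => hno b hv hb
  obtain ⟨p⟩ := td.isTree.isConnected b a
  obtain ⟨s', s, hadjT, hs'A, hsA, q, hq⟩ :=
    aux_exists_first_exit (Pred := fun t => v ∈ td.bag t) p hbnA haA
  set T' := td.tree.deleteEdges {s(s, s')} with hT'
  set C : td.T → Prop := fun t => T'.Reachable t s with hC
  set D : td.T → Prop := fun t => T'.Reachable t s' with hD
  have hbridge : ¬ T'.Reachable s s' := by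
    have hB := (isAcyclic_iff_forall_edge_isBridge.mp td.isTree.IsAcyclic)
      (e := s(s, s')) (by simpa using hadjT.symm)
    rw [SimpleGraph.isBridge_iff] at hB
    exact hB
  have hCDdisj : ∀ t, C t → D t → False := fun t hc hd => hbridge (hc.symm.trans hd)
  have hCDuniv : ∀ t, C t ∨ D t := by
    intro t
    obtain ⟨pw⟩ := td.isTree.isConnected s t
    refine aux_walk_induction (R := fun t => C t ∨ D t) ?_ pw
      (Or.inl (SimpleGraph.Reachable.refl s))
    intro a' b' hab hR
    by_cases he : s(a', b') = s(s, s')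
    · rw [Sym2.eq_iff] at he
      rcases he with ⟨rfl, rfl⟩ | ⟨rfl, rfl⟩
      · exact Or.inr (SimpleGraph.Reachable.refl _)
      · exact Or.inl (SimpleGraph.Reachable.refl _)
    · have hadj' : T'.Adj a' b' := by
        rw [hT', SimpleGraph.deleteEdges_adj]
        exact ⟨hab, by simpa using he⟩
      rcases hR with h' | h'
      · exact Or.inl (hadj'.symm.reachable.trans h')
      · exact Or.inr (hadj'.symm.reachable.trans h')
  have cross : ∀ x : V, ∀ t1, C t1 → x ∈ td.bag t1 → ∀ t2, D t2 → x ∈ td.bag t2 →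
      x ∈ td.bag s ∧ x ∈ td.bag s' := by
    intro x t1 hc1 hx1 t2 hd2 hx2
    obtain ⟨pw⟩ := (td.bag_connected x).preconnected ⟨t1, hx1⟩ ⟨t2, hx2⟩
    obtain ⟨am, bm, habI, hPa, hPb⟩ :=
      aux_exists_crossing (Pred := fun u : {t | x ∈ td.bag t} => C u.1) pw hc1
        (fun hc2 => hCDdisj t2 hc2 hd2)
    have hadj2 : td.tree.Adj am.1 bm.1 := habI
    have heq : s(am.1, bm.1) = s(s, s') := by
      by_contra hne2
      apply hPb
      have hTadj : T'.Adj am.1 bm.1 := by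
        rw [hT', SimpleGraph.deleteEdges_adj]
        exact ⟨hadj2, by simpa using hne2⟩
      exact hTadj.symm.reachable.trans hPa
    rw [Sym2.eq_iff] at heq
    rcases heq with ⟨h1, h2⟩ | ⟨h1, h2⟩
    · exact ⟨h1 ▸ am.2, h2 ▸ bm.2⟩
    · exact absurd (h1 ▸ hPa) (fun hcs' => hCDdisj s' hcs' (SimpleGraph.Reachable.refl s'))
  have hbD : D b := by
    have hcond : ∀ e ∈ q.edges, e ∉ ({s(s, s')} : Set (Sym2 td.T)) := by
      intro e he hmem
      rw [Set.mem_singleton_iff] at hmem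
      subst hmem
      exact hq s (q.fst_mem_support_of_mem_edges he) hsA
    exact ⟨q.toDeleteEdges {s(s, s')} hcond⟩
  have hsC : C s := SimpleGraph.Reachable.refl s
  have sep : ∀ (x y : V) (pp : G.Walk x y), (∃ t, C t ∧ x ∈ td.bag t) →
      (∃ t, D t ∧ y ∈ td.bag t) →
      ∃ z, z ∈ pp.support ∧ z ∈ td.bag s ∧ z ∈ td.bag s' := by
    intro x y pp
    induction pp with
    | nil =>
      rintro ⟨t, hct, hxt⟩ ⟨t2, hdt2, hxt2⟩
      exact ⟨_, by simp, cross _ t hct hxt t2 hdt2 hxt2⟩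
    | @cons x' m y' h' pp' ih =>
      rintro ⟨t, hct, hxt⟩ hy
      obtain ⟨t2, hx2, hm2⟩ := td.bag_cover h'
      rcases hCDuniv t2 with hc | hd
      · obtain ⟨z, hz, hzs⟩ := ih ⟨t2, hc, hm2⟩ hy
        exact ⟨z, by simp [hz], hzs⟩
      · exact ⟨x', by simp, cross x' t hct hxt t2 hd hx2⟩
  obtain ⟨P, hPinj, hPdisj⟩ := hpaths
  have hzex : ∀ i : Fin (k + 1), ∃ z, z ∈ (P i).1.support ∧ z ∈ td.bag s ∧ z ∈ td.bag s' :=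
    fun i => sep v w (P i).1 ⟨s, hsC, hsA⟩ ⟨b, hbD, hbA⟩
  choose z hzsup hzs hzs' using hzex
  have hzv : ∀ i, z i ≠ v := fun i h => hs'A (h ▸ hzs' i)
  have hwS : w ∉ td.bag s := fun hw => hno s hsA hw
  have hzw : ∀ i, z i ≠ w := fun i h => hwS (h ▸ hzs i)
  have hzinj : Function.Injective z := by
    intro i j hij
    by_contra hne2
    rcases hPdisj i j hne2 (z i) (hzsup i) (by rw [hij]; exact hzsup j) with h | h
    · exact hzv i h
    · exact hzw i h
  have hrange : (Set.range z).ncard = k + 1 := by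
    rw [← Set.image_univ, Set.ncard_image_of_injective _ hzinj, Set.ncard_univ,
      Nat.card_eq_fintype_card, Fintype.card_fin]
  have hsub : insert v (Set.range z) ⊆ td.bag s := by
    rintro x hx
    rcases hx with rfl | ⟨i, rfl⟩
    · exact hsA
    · exact hzs i
  have hvnr : v ∉ Set.range z := by
    rintro ⟨i, hi⟩
    exact hzv i hi
  have hcard : (insert v (Set.range z)).ncard = k + 2 := by
    rw [Set.ncard_insert_of_notMem hvnr, hrange]
  have hle2 : k + 2 ≤ (td.bag s).ncard := hcard ▸ Set.ncard_le_ncard hsub (Set.toFinite _)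
  have := hwd s
  omega

end KeyLemma

/-- If `G` has tree width at most `k` and `G'` is the improved version of `G`
with respect to `k`, then every tree decomposition of `G` of width at most `k` is also a tree
decomposition of `G'` (i.e. it additionally covers all edges of `G'`); in particular
`tw(G') = tw(G)`. -/
theorem improvedGraph_treeDecomp_treewidth {V : Type} [Fintype V] (k : ℕ)
    (G : SimpleGraph V) (htw : G.HasTreeDecompWidthLE k) :
    (∀ td : G.TreeDecomp, (∀ t, (td.bag t).ncard ≤ k + 1) →
      ∀ ⦃v w : V⦄, (improvedGraph G k).Adj v w → ∃ t, v ∈ td.bag t ∧ w ∈ td.bag t) ∧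
    treewidth (improvedGraph G k) = treewidth G := by
  have part1 : ∀ td : G.TreeDecomp, (∀ t, (td.bag t).ncard ≤ k + 1) →
      ∀ ⦃v w : V⦄, (improvedGraph G k).Adj v w → ∃ t, v ∈ td.bag t ∧ w ∈ td.bag t :=
    fun td hwd v w h => improved_key k G td hwd h
  refine ⟨part1, ?_⟩
  have hmono : ∀ m, (improvedGraph G k).HasTreeDecompWidthLE m → G.HasTreeDecompWidthLE m := by
    rintro m ⟨td, htd⟩
    exact ⟨{ T := td.T, finite := td.finite, tree := td.tree, isTree := td.isTree,
             bag := td.bag, bag_connected := td.bag_connected,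
             bag_cover := fun v w h => td.bag_cover (Or.inl h) }, htd⟩
  have hset : ({m | G.HasTreeDecompWidthLE m}).Nonempty := ⟨k, htw⟩
  have hnmem : G.HasTreeDecompWidthLE (treewidth G) := Nat.sInf_mem hset
  have hnk : treewidth G ≤ k := Nat.sInf_le htw
  obtain ⟨td, htd⟩ := hnmem
  have htd' : ∀ t, (td.bag t).ncard ≤ k + 1 := fun t => le_trans (htd t) (by omega)
  have h1 : (improvedGraph G k).HasTreeDecompWidthLE (treewidth G) :=
    ⟨{ T := td.T, finite := td.finite, tree := td.tree, isTree := td.isTree,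
       bag := td.bag, bag_connected := td.bag_connected,
       bag_cover := part1 td htd' }, htd⟩
  have hle : treewidth (improvedGraph G k) ≤ treewidth G := Nat.sInf_le h1
  have hge : treewidth G ≤ treewidth (improvedGraph G k) :=
    Nat.sInf_le (hmono _ (Nat.sInf_mem
      (⟨_, h1⟩ : ({m | (improvedGraph G k).HasTreeDecompWidthLE m}).Nonempty)))
  exact le_antisymm hle hge
end

section
/- Let k ∈ ℕ and let G be a finite graph of tree width at most k. Then G has a tree decomposition (T, β) such that (1) for every node t of T, the induced subgraph G[β(t)] is an atom, and (2) for every edge {t, u} of T, the set β(t) ∩ β(u) induces a clique in G; consequently the adhesion of (T, β) is at most k + 1. -/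
open SimpleGraph

section Aux
variable {V : Type*} {W : Type*} {G : SimpleGraph V}

lemma isClique_induce_iff' {A : Set V} {s : Set A} :
    (G.induce A).IsClique s ↔ G.IsClique (Subtype.val '' s) := by
  constructor
  · rintro h x ⟨x', hx', rfl⟩ y ⟨y', hy', rfl⟩ hne
    exact h hx' hy' (fun e => hne (by rw [e]))
  · rintro h ⟨x, hxA⟩ hx ⟨y, hyA⟩ hy hne
    exact h ⟨_, hx, rfl⟩ ⟨_, hy, rfl⟩ (by simpa using fun e => hne (by exact Subtype.ext e))

noncomputable def induceInduceIso' (G : SimpleGraph V) (A : Set V) (s : Set A) :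
    (G.induce A).induce s ≃g G.induce (Subtype.val '' s) where
  toEquiv := (Equiv.Set.image Subtype.val s Subtype.val_injective)
  map_rel_iff' := by
    rintro ⟨⟨x, hxA⟩, hx⟩ ⟨⟨y, hyA⟩, hy⟩
    simp [Equiv.Set.image, Equiv.Set.imageOfInjOn]

def isoComplHom {H : SimpleGraph V} {H' : SimpleGraph W} (e : H ≃g H') (S : Set V) :
    H'.induce ((⇑e '' S)ᶜ) →g H.induce (Sᶜ) :=
  ⟨fun x => ⟨e.symm x.1, fun hx => x.2 ⟨_, hx, by simp⟩⟩,
   fun hadj => e.symm.map_adj_iff.2 (by simpa using hadj)⟩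

lemma IsAtomGraph.of_iso' {H : SimpleGraph V} {H' : SimpleGraph W} (e : H ≃g H')
    (h : H'.IsAtomGraph) : H.IsAtomGraph := by
  rintro S ⟨hcl, v, w, hnr⟩
  refine h (⇑e '' S) ⟨?_, ⟨⟨e v, ?_⟩, ⟨e w, ?_⟩, ?_⟩⟩
  · rintro x ⟨x', hx', rfl⟩ y ⟨y', hy', rfl⟩ hne
    exact e.map_adj_iff.2 (hcl hx' hy' (fun q => hne (by rw [q])))
  · rintro ⟨x, hx, hq⟩; exact v.2 (by rwa [← e.toEquiv.injective hq])
  · rintro ⟨x, hx, hq⟩; exact w.2 (by rwa [← e.toEquiv.injective hq])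
  · intro hr
    have h2 := hr.map (isoComplHom e S)
    have key : ∀ (z : ↑(Sᶜ : Set V)) hz, isoComplHom e S ⟨e ↑z, hz⟩ = z := by
      intro z hz
      apply Subtype.ext
      show e.symm (e ↑z) = ↑z
      simp
    rw [key v _, key w _] at h2
    exact hnr h2

/-- From reachability in an induced subgraph, get a walk in the ambient graph with
support inside the set. -/
lemma exists_walk_support_subset {s : Set V} {a b : ↥s}
    (h : (G.induce s).Reachable a b) :
    ∃ w : G.Walk a.1 b.1, ∀ x ∈ w.support, x ∈ s := by
  obtain ⟨p⟩ := h
  refine ⟨p.map ⟨Subtype.val, fun h => h⟩, ?_⟩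
  intro x hx
  rw [SimpleGraph.Walk.support_map] at hx
  obtain ⟨y, _, rfl⟩ := List.mem_map.1 hx
  exact y.2

theorem SimpleGraph.TreeDecomp.exists_bag_superset (td : G.TreeDecomp) {K : Set V}
    (hK : G.IsClique K) : ∃ t, K ⊆ td.bag t := by
  classical
  by_contra hcon
  push_neg at hcon
  simp only [Set.not_subset] at hcon
  choose vt hvtK hvt using hcon
  haveI : Finite td.T := td.finite
  haveI : Fintype td.T := Fintype.ofFinite _
  haveI : Fintype td.tree.edgeSet := Fintype.ofFinite _
  -- pick for each node t a neighbor toward the subtree of vt t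
  have hstep : ∀ t : td.T, ∃ u, td.tree.Adj t u ∧
      ∀ s, vt t ∈ td.bag s → ∃ w : td.tree.Walk s u, t ∉ w.support := by
    intro t
    have hconn := td.bag_connected (vt t)
    obtain ⟨s0⟩ := hconn.nonempty
    have hs0 : vt t ∈ td.bag s0.1 := s0.2
    have hts0 : t ≠ s0.1 := fun h => hvt t (by rw [← h] at hs0; exact hs0)
    obtain ⟨w0⟩ := td.isTree.isConnected t s0.1
    obtain ⟨u, hadj, q, hq⟩ := SimpleGraph.Walk.exists_eq_cons_of_ne hts0 w0.toPath.1
    have hpath := w0.toPath.2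
    rw [hq, SimpleGraph.Walk.cons_isPath_iff] at hpath
    refine ⟨u, hadj, fun s hs => ?_⟩
    -- walk from s to s0 inside the subtree of vt t, then back along q.reverse to u
    have hr : (td.tree.induce {x | vt t ∈ td.bag x}).Reachable ⟨s, hs⟩ ⟨s0.1, hs0⟩ :=
      hconn ⟨s, hs⟩ ⟨s0.1, hs0⟩
    obtain ⟨w1, hw1⟩ := exists_walk_support_subset hr
    refine ⟨w1.append q.reverse, ?_⟩
    rw [SimpleGraph.Walk.mem_support_append_iff]
    rintro (h | h)
    · exact hvt t (hw1 t h)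
    · rw [SimpleGraph.Walk.support_reverse, List.mem_reverse] at h
      exact hpath.2 h
  choose f hadj hf using hstep
  -- pigeonhole: T has more vertices than tree edges
  have hcard : Fintype.card td.tree.edgeSet < Fintype.card td.T := by
    have := td.isTree.card_edgeFinset
    rw [SimpleGraph.edgeFinset_card] at this
    omega
  obtain ⟨t, u, htu, heq⟩ : ∃ t u, t ≠ u ∧ (s(t, f t) : Sym2 td.T) = s(u, f u) := by
    have hni : ¬ Function.Injective
        (fun t => (⟨s(t, f t), (hadj t)⟩ : td.tree.edgeSet)) := by
      intro hinj
      exact absurd (Fintype.card_le_of_injective _ hinj) (not_le.2 hcard)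
    rw [Function.not_injective_iff] at hni
    obtain ⟨t, u, h1, h2⟩ := hni
    exact ⟨t, u, h2, by simpa using congrArg Subtype.val h1⟩
  rw [Sym2.eq_iff] at heq
  have hfu : f u = t ∧ f t = u := by
    rcases heq with ⟨h1, h2⟩ | ⟨h1, h2⟩
    · exact absurd h1 htu
    · exact ⟨h1.symm, h2⟩
  -- find a common bag node s* for vt t and vt u
  have hs' : ∃ s, vt t ∈ td.bag s ∧ vt u ∈ td.bag s := by
    by_cases hv : vt t = vt u
    · obtain ⟨s0⟩ := (td.bag_connected (vt t)).nonempty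
      exact ⟨s0.1, s0.2, hv ▸ s0.2⟩
    · obtain ⟨s, h1, h2⟩ := td.bag_cover (hK (hvtK t) (hvtK u) hv)
      exact ⟨s, h1, h2⟩
  obtain ⟨s, hst, hsu⟩ := hs'
  obtain ⟨w1, hw1⟩ := hf t s hst   -- walk s → f t = u avoiding t
  obtain ⟨w2, hw2⟩ := hf u s hsu   -- walk s → f u = t avoiding u
  have hw1' : t ∉ (w1.copy rfl hfu.2).support := by rwa [SimpleGraph.Walk.support_copy]
  have hw2' : u ∉ (w2.copy rfl hfu.1).support := by rwa [SimpleGraph.Walk.support_copy]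
  -- build a walk t → u avoiding the edge s(t,u)
  have hbridge : td.tree.IsBridge s(t, u) :=
    (isAcyclic_iff_forall_adj_isBridge.1 td.isTree.IsAcyclic) (hfu.2 ▸ hadj t)
  rw [SimpleGraph.isBridge_iff] at hbridge
  refine hbridge ?_
  have w : (td.tree.deleteEdges {s(t, u)}).Walk t u := by
    refine ((w2.copy rfl hfu.1).reverse.append (w1.copy rfl hfu.2)).toDeleteEdges _ ?_
    intro e he
    rw [SimpleGraph.Walk.edges_append] at he
    simp only [Set.mem_singleton_iff]
    rintro rfl
    rcases List.mem_append.1 he with h | h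
    · rw [SimpleGraph.Walk.edges_reverse, List.mem_reverse] at h
      exact hw2' (SimpleGraph.Walk.snd_mem_support_of_mem_edges _ h)
    · exact hw1' (SimpleGraph.Walk.fst_mem_support_of_mem_edges _ h)
  exact ⟨w⟩

end Aux

section Glue

variable {A : Type} {B : Type}

/-- Glue two graphs by joining `a0` to `b0` with an edge. -/
def glue' (GA : SimpleGraph A) (GB : SimpleGraph B) (a0 : A) (b0 : B) :
    SimpleGraph (A ⊕ B) where
  Adj x y :=
    match x, y with
    | .inl a, .inl a' => GA.Adj a a'
    | .inr b, .inr b' => GB.Adj b b'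
    | .inl a, .inr b => a = a0 ∧ b = b0
    | .inr b, .inl a => a = a0 ∧ b = b0
  symm := ⟨by rintro (a | b) (a' | b') h <;> simp_all <;> exact h.symm⟩
  loopless := ⟨by rintro (a | b) h <;> simp_all <;> exact GA.loopless _ h⟩

variable {GA : SimpleGraph A} {GB : SimpleGraph B} {a0 : A} {b0 : B}

@[simp] lemma glue_adj_inl_inl' {a a'} :
    (glue' GA GB a0 b0).Adj (.inl a) (.inl a') ↔ GA.Adj a a' := Iff.rfl
@[simp] lemma glue_adj_inr_inr' {b b'} :
    (glue' GA GB a0 b0).Adj (.inr b) (.inr b') ↔ GB.Adj b b' := Iff.rfl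
@[simp] lemma glue_adj_inl_inr' {a b} :
    (glue' GA GB a0 b0).Adj (.inl a) (.inr b) ↔ a = a0 ∧ b = b0 := Iff.rfl
@[simp] lemma glue_adj_inr_inl' {b a} :
    (glue' GA GB a0 b0).Adj (.inr b) (.inl a) ↔ a = a0 ∧ b = b0 := Iff.rfl

lemma glue_connected' (hA : GA.Connected) (hB : GB.Connected) :
    (glue' GA GB a0 b0).Connected := by
  have hre : ∀ x : A ⊕ B, (glue' GA GB a0 b0).Reachable x (.inl a0) := by
    rintro (a | b)
    · exact (hA a a0).map ⟨Sum.inl, fun h => h⟩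
    · refine Reachable.trans ?_ (Adj.reachable (by simp : (glue' GA GB a0 b0).Adj (.inr b0) (.inl a0)))
      exact (hB b b0).map ⟨Sum.inr, fun h => h⟩
  haveI : Nonempty (A ⊕ B) := ⟨.inl a0⟩
  exact ⟨fun x y => (hre x).trans (hre y).symm⟩

/-- Project walks avoiding a left edge to the left graph minus that edge. -/
lemma projL {a₁ a₂ : A} :
    ∀ {x y : A ⊕ B}, ((glue' GA GB a0 b0).deleteEdges {s(Sum.inl a₁, Sum.inl a₂)}).Walk x y →
      (GA.deleteEdges {s(a₁, a₂)}).Reachable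
        (Sum.elim id (fun _ => a0) x) (Sum.elim id (fun _ => a0) y) := by
  intro x y w
  induction w with
  | nil => rfl
  | cons h w ih =>
      rename_i p q r
      rw [SimpleGraph.deleteEdges_adj] at h
      refine Reachable.trans ?_ ih
      match p, q with
      | .inl a, .inl a' =>
          refine Adj.reachable ?_
          rw [SimpleGraph.deleteEdges_adj]
          refine ⟨h.1, fun hc => h.2 ?_⟩
          rw [Set.mem_singleton_iff] at hc ⊢
          rcases Sym2.eq_iff.1 hc with ⟨rfl, rfl⟩ | ⟨rfl, rfl⟩
          · rfl
          · exact Sym2.eq_swap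
      | .inl a, .inr b =>
          have hh := h.1
          rw [glue_adj_inl_inr'] at hh
          simp only [Sum.elim_inl, Sum.elim_inr, id, hh.1]
          exact Reachable.refl _
      | .inr b, .inl a =>
          have hh := h.1
          rw [glue_adj_inr_inl'] at hh
          simp only [Sum.elim_inl, Sum.elim_inr, id, hh.1]
          exact Reachable.refl _
      | .inr b, .inr b' => rfl

lemma projR {b₁ b₂ : B} :
    ∀ {x y : A ⊕ B}, ((glue' GA GB a0 b0).deleteEdges {s(Sum.inr b₁, Sum.inr b₂)}).Walk x y →
      (GB.deleteEdges {s(b₁, b₂)}).Reachable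
        (Sum.elim (fun _ => b0) id x) (Sum.elim (fun _ => b0) id y) := by
  intro x y w
  induction w with
  | nil => rfl
  | cons h w ih =>
      rename_i p q r
      rw [SimpleGraph.deleteEdges_adj] at h
      refine Reachable.trans ?_ ih
      match p, q with
      | .inr b, .inr b' =>
          refine Adj.reachable ?_
          rw [SimpleGraph.deleteEdges_adj]
          refine ⟨h.1, fun hc => h.2 ?_⟩
          rw [Set.mem_singleton_iff] at hc ⊢
          rcases Sym2.eq_iff.1 hc with ⟨rfl, rfl⟩ | ⟨rfl, rfl⟩
          · rfl
          · exact Sym2.eq_swap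
      | .inl a, .inr b =>
          have hh := h.1
          rw [glue_adj_inl_inr'] at hh
          simp only [Sum.elim_inl, Sum.elim_inr, id, hh.2]
          exact Reachable.refl _
      | .inr b, .inl a =>
          have hh := h.1
          rw [glue_adj_inr_inl'] at hh
          simp only [Sum.elim_inl, Sum.elim_inr, id, hh.2]
          exact Reachable.refl _
      | .inl a, .inl a' => rfl

lemma walk_isLeft {H : SimpleGraph (A ⊕ B)}
    (hH : ∀ x y, H.Adj x y → x.isLeft = y.isLeft) :
    ∀ {x y : A ⊕ B}, H.Walk x y → x.isLeft = y.isLeft := by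
  intro x y w
  induction w with
  | nil => rfl
  | cons h w ih => exact (hH _ _ h).trans ih

lemma no_cross_walk :
    ∀ {x y : A ⊕ B},
      ((glue' GA GB a0 b0).deleteEdges {s(Sum.inl a0, Sum.inr b0)}).Walk x y →
        x.isLeft = y.isLeft := by
  intro x y w
  refine walk_isLeft ?_ w
  rintro (p | p) (q | q) h
  · rfl
  · exfalso
    rw [SimpleGraph.deleteEdges_adj] at h
    have hh := glue_adj_inl_inr'.1 h.1
    refine h.2 ?_
    rw [Set.mem_singleton_iff, hh.1, hh.2]
  · exfalso
    rw [SimpleGraph.deleteEdges_adj] at h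
    have hh := glue_adj_inr_inl'.1 h.1
    refine h.2 ?_
    rw [Set.mem_singleton_iff, Sym2.eq_swap, hh.1, hh.2]
  · rfl

theorem glue_isTree' (hA : GA.IsTree) (hB : GB.IsTree) :
    (glue' GA GB a0 b0).IsTree := by
  constructor
  case connected => exact glue_connected' hA.isConnected hB.isConnected
  case isAcyclic =>
    rw [isAcyclic_iff_forall_adj_isBridge]
    rintro (a | b) (a' | b') hadj <;> rw [SimpleGraph.isBridge_iff] <;>
        refine fun hr => ?_
    · obtain ⟨w⟩ := hr
      have hbr := (isAcyclic_iff_forall_adj_isBridge.1 hA.IsAcyclic) (glue_adj_inl_inl'.1 hadj)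
      rw [SimpleGraph.isBridge_iff] at hbr
      exact hbr (projL (a₁ := a) (a₂ := a') w)
    · have hh := glue_adj_inl_inr'.1 hadj
      obtain ⟨w⟩ := hr
      have he : ({s(Sum.inl a, Sum.inr b')} : Set (Sym2 (A ⊕ B)))
          = {s(Sum.inl a0, Sum.inr b0)} := by rw [hh.1, hh.2]
      have w' : ((glue' GA GB a0 b0).deleteEdges {s(Sum.inl a0, Sum.inr b0)}).Walk
          (Sum.inl a) (Sum.inr b') := he ▸ w
      simpa using no_cross_walk w'
    · have hh := glue_adj_inr_inl'.1 hadj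
      obtain ⟨w⟩ := hr
      have he : ({s(Sum.inr b, Sum.inl a')} : Set (Sym2 (A ⊕ B)))
          = {s(Sum.inl a0, Sum.inr b0)} := by rw [Sym2.eq_swap, hh.1, hh.2]
      have w' : ((glue' GA GB a0 b0).deleteEdges {s(Sum.inl a0, Sum.inr b0)}).Walk
          (Sum.inr b) (Sum.inl a') := he ▸ w
      simpa using no_cross_walk w'
    · obtain ⟨w⟩ := hr
      have hbr := (isAcyclic_iff_forall_adj_isBridge.1 hB.IsAcyclic) (glue_adj_inr_inr'.1 hadj)
      rw [SimpleGraph.isBridge_iff] at hbr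
      exact hbr (projR (b₁ := b) (b₂ := b') w)

end Glue

section Main
theorem aux_decomp (n : ℕ) : ∀ (V : Type) (inst : Fintype V) (G : SimpleGraph V),
    Fintype.card V ≤ n →
    ∃ td : G.TreeDecomp,
      (∀ t, (G.induce (td.bag t)).IsAtomGraph) ∧
      (∀ ⦃t u⦄, td.tree.Adj t u → G.IsClique (td.bag t ∩ td.bag u)) := by
  induction n with
  | zero =>
      intro V inst G hcard
      haveI : IsEmpty V := Fintype.card_eq_zero_iff.1 (Nat.le_zero.1 hcard)
      refine ⟨⟨Unit, inferInstance, ⊥, ?_, fun _ => Set.univ, ?_, ?_⟩, ?_, ?_⟩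
      · exact ⟨{ preconnected := preconnected_bot, nonempty := ⟨()⟩ }, isAcyclic_bot⟩
      · intro v; exact (IsEmpty.false v).elim
      · intro v w h; exact (IsEmpty.false v).elim
      · intro t S hS
        obtain ⟨_, v, _, _⟩ := hS
        exact IsEmpty.false v.1
      · intro t u h; exact h.elim
  | succ n ih =>
      intro V inst G hcard
      by_cases hat : G.IsAtomGraph
      · haveI : Nonempty Unit := inferInstance
        refine ⟨⟨Unit, inferInstance, ⊥, ?_, fun _ => Set.univ, ?_, ?_⟩, ?_, ?_⟩
        · exact ⟨{ preconnected := preconnected_bot, nonempty := ⟨()⟩ }, isAcyclic_bot⟩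
        · intro v
          exact { preconnected := fun x y => by rw [Subsingleton.elim x y],
                  nonempty := ⟨⟨(), Set.mem_univ _⟩⟩ }
        · intro v w _; exact ⟨(), trivial, trivial⟩
        · intro t
          exact IsAtomGraph.of_iso' (induceUnivIso G) hat
        · intro t u h; exact h.elim
      · -- G has a clique separator
        rw [SimpleGraph.IsAtomGraph] at hat
        push_neg at hat
        obtain ⟨S, hcl, v, w, hnr⟩ := hat
        classical
        set C : Set V := Subtype.val '' {x | (G.induce (Sᶜ : Set V)).Reachable v x} with hCdef
        have hCcompl : C ⊆ Sᶜ := by rintro x ⟨x', _, rfl⟩; exact x'.2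
        set A : Set V := S ∪ C with hAdef
        set B : Set V := Cᶜ with hBdef
        have hSA : S ⊆ A := Set.subset_union_left
        have hSB : S ⊆ B := fun x hx hxC => hCcompl hxC hx
        have hABS : A ∩ B ⊆ S := by
          rintro x ⟨hxA, hxB⟩
          rcases hxA with h | h
          · exact h
          · exact (hxB h).elim
        have hvC : v.1 ∈ C := ⟨v, Reachable.refl v, rfl⟩
        have hwB : w.1 ∉ A := by
          rintro (h | ⟨x', hx', hval⟩)
          · exact w.2 h
          · refine hnr ?_
            have : x' = w := Subtype.ext hval
            exact this ▸ hx'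
        have hvB : v.1 ∉ B := fun h => h hvC
        have hclosure : ∀ ⦃x y : V⦄, x ∈ C → G.Adj x y → y ∈ A := by
          rintro x y ⟨x', hx', rfl⟩ hadj
          by_cases hy : y ∈ S
          · exact hSA hy
          · refine Or.inr ⟨⟨y, hy⟩, hx'.trans (Adj.reachable hadj), rfl⟩
        have hedge : ∀ ⦃x y : V⦄, G.Adj x y → (x ∈ A ∧ y ∈ A) ∨ (x ∈ B ∧ y ∈ B) := by
          intro x y hadj
          by_cases hx : x ∈ C
          · exact Or.inl ⟨Or.inr hx, hclosure hx hadj⟩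
          · by_cases hy : y ∈ C
            · exact Or.inl ⟨hclosure hy hadj.symm, Or.inr hy⟩
            · exact Or.inr ⟨hx, hy⟩
        haveI instA : Fintype ↥A := Fintype.ofFinite _
        haveI instB : Fintype ↥B := Fintype.ofFinite _
        have hcardA : Fintype.card ↥A ≤ n := by
          have h2 : Fintype.card ↥A < Fintype.card V := by
            have h3 := Fintype.card_subtype_lt (x := w.1) hwB
            convert h3 using 2
          omega
        have hcardB : Fintype.card ↥B ≤ n := by
          have h2 : Fintype.card ↥B < Fintype.card V := by
            have h3 := Fintype.card_subtype_lt (x := v.1) hvB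
            convert h3 using 2
          omega
        obtain ⟨tdA, hatomA, hclA⟩ := ih ↥A instA (G.induce A) hcardA
        obtain ⟨tdB, hatomB, hclB⟩ := ih ↥B instB (G.induce B) hcardB
        -- S is a clique in both induced graphs; find bags containing it
        have hSA' : (G.induce A).IsClique (Subtype.val ⁻¹' S) := by
          rintro ⟨x, hxA⟩ hx ⟨y, hyA⟩ hy hne
          exact hcl hx hy (fun h => hne (Subtype.ext h))
        have hSB' : (G.induce B).IsClique (Subtype.val ⁻¹' S) := by
          rintro ⟨x, hxB⟩ hx ⟨y, hyB⟩ hy hne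
          exact hcl hx hy (fun h => hne (Subtype.ext h))
        obtain ⟨tA, htA⟩ := tdA.exists_bag_superset hSA'
        obtain ⟨tB, htB⟩ := tdB.exists_bag_superset hSB'
        haveI : Finite tdA.T := tdA.finite
        haveI : Finite tdB.T := tdB.finite
        have memL : ∀ (x : V) (hx : x ∈ A) (t : tdA.T),
            Sum.inl t ∈ {s | x ∈ Sum.elim (fun t => Subtype.val '' (tdA.bag t)) (fun t => Subtype.val '' (tdB.bag t)) s} ↔ ⟨x, hx⟩ ∈ tdA.bag t := by
          intro x hx t
          constructor
          · rintro ⟨x0, h0, hval⟩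
            have : x0 = ⟨x, hx⟩ := Subtype.ext hval
            exact this ▸ h0
          · intro h; exact ⟨⟨x, hx⟩, h, rfl⟩
        have memR : ∀ (x : V) (hx : x ∈ B) (t : tdB.T),
            Sum.inr t ∈ {s | x ∈ Sum.elim (fun t => Subtype.val '' (tdA.bag t)) (fun t => Subtype.val '' (tdB.bag t)) s} ↔ ⟨x, hx⟩ ∈ tdB.bag t := by
          intro x hx t
          constructor
          · rintro ⟨x0, h0, hval⟩
            have : x0 = ⟨x, hx⟩ := Subtype.ext hval
            exact this ▸ h0
          · intro h; exact ⟨⟨x, hx⟩, h, rfl⟩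
        have reachL : ∀ (x : V) (hx : x ∈ A) (t u : tdA.T)
            (ht : ⟨x, hx⟩ ∈ tdA.bag t) (hu : ⟨x, hx⟩ ∈ tdA.bag u),
            ((glue' tdA.tree tdB.tree tA tB).induce {s | x ∈ Sum.elim (fun t => Subtype.val '' (tdA.bag t)) (fun t => Subtype.val '' (tdB.bag t)) s}).Reachable
              ⟨Sum.inl t, (memL x hx t).2 ht⟩ ⟨Sum.inl u, (memL x hx u).2 hu⟩ := by
          intro x hx t u ht hu
          have hr := (tdA.bag_connected ⟨x, hx⟩) ⟨t, ht⟩ ⟨u, hu⟩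
          exact hr.map (⟨fun s => ⟨Sum.inl s.1, (memL x hx s.1).2 s.2⟩,
             fun h => h⟩ : (tdA.tree.induce {s | (⟨x, hx⟩ : ↥A) ∈ tdA.bag s}) →g
              ((glue' tdA.tree tdB.tree tA tB).induce {s | x ∈ Sum.elim (fun t => Subtype.val '' (tdA.bag t)) (fun t => Subtype.val '' (tdB.bag t)) s}))
        have reachR : ∀ (x : V) (hx : x ∈ B) (t u : tdB.T)
            (ht : ⟨x, hx⟩ ∈ tdB.bag t) (hu : ⟨x, hx⟩ ∈ tdB.bag u),
            ((glue' tdA.tree tdB.tree tA tB).induce {s | x ∈ Sum.elim (fun t => Subtype.val '' (tdA.bag t)) (fun t => Subtype.val '' (tdB.bag t)) s}).Reachable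
              ⟨Sum.inr t, (memR x hx t).2 ht⟩ ⟨Sum.inr u, (memR x hx u).2 hu⟩ := by
          intro x hx t u ht hu
          have hr := (tdB.bag_connected ⟨x, hx⟩) ⟨t, ht⟩ ⟨u, hu⟩
          exact hr.map (⟨fun s => ⟨Sum.inr s.1, (memR x hx s.1).2 s.2⟩,
             fun h => h⟩ : (tdB.tree.induce {s | (⟨x, hx⟩ : ↥B) ∈ tdB.bag s}) →g
              ((glue' tdA.tree tdB.tree tA tB).induce {s | x ∈ Sum.elim (fun t => Subtype.val '' (tdA.bag t)) (fun t => Subtype.val '' (tdB.bag t)) s}))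
        have hbc : ∀ x : V, ((glue' tdA.tree tdB.tree tA tB).induce {s | x ∈ Sum.elim (fun t => Subtype.val '' (tdA.bag t)) (fun t => Subtype.val '' (tdB.bag t)) s}).Connected := by
          intro x
          by_cases hxS : x ∈ S
          · -- hub through the bridge
            have hxA : x ∈ A := hSA hxS
            have hxB : x ∈ B := hSB hxS
            have htAx : (⟨x, hxA⟩ : ↥A) ∈ tdA.bag tA := htA hxS
            have htBx : (⟨x, hxB⟩ : ↥B) ∈ tdB.bag tB := htB hxS
            have hbridge : ((glue' tdA.tree tdB.tree tA tB).induce {s | x ∈ Sum.elim (fun t => Subtype.val '' (tdA.bag t)) (fun t => Subtype.val '' (tdB.bag t)) s}).Adj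
                ⟨Sum.inl tA, (memL x hxA tA).2 htAx⟩ ⟨Sum.inr tB, (memR x hxB tB).2 htBx⟩ :=
              by exact ⟨rfl, rfl⟩
            have hub : ∀ z : ↥{s | x ∈ Sum.elim (fun t => Subtype.val '' (tdA.bag t)) (fun t => Subtype.val '' (tdB.bag t)) s},
                ((glue' tdA.tree tdB.tree tA tB).induce {s | x ∈ Sum.elim (fun t => Subtype.val '' (tdA.bag t)) (fun t => Subtype.val '' (tdB.bag t)) s}).Reachable z ⟨Sum.inl tA, (memL x hxA tA).2 htAx⟩ := by
              rintro ⟨(t | t), hz⟩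
              · exact reachL x hxA t tA ((memL x hxA t).1 hz) htAx
              · refine ((reachR x hxB t tB ((memR x hxB t).1 hz) htBx).trans
                  (Adj.reachable hbridge.symm))
            exact { preconnected := fun z z' => (hub z).trans (hub z').symm,
                     nonempty := ⟨⟨Sum.inl tA, (memL x hxA tA).2 htAx⟩⟩ }
          · -- x is only on one side
            by_cases hxC : x ∈ C
            · have hxA : x ∈ A := Or.inr hxC
              have hxB : x ∉ B := fun hb => hb hxC
              have honly : ∀ z : ↥{s | x ∈ Sum.elim (fun t => Subtype.val '' (tdA.bag t)) (fun t => Subtype.val '' (tdB.bag t)) s}, ∃ t, ∃ h : Sum.inl t ∈ {s | x ∈ Sum.elim (fun t => Subtype.val '' (tdA.bag t)) (fun t => Subtype.val '' (tdB.bag t)) s},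
                  z = ⟨Sum.inl t, h⟩ := by
                rintro ⟨(t | t), hz⟩
                · exact ⟨t, hz, rfl⟩
                · exfalso
                  obtain ⟨x0, _, hval⟩ := hz
                  exact hxB (hval ▸ x0.2)
              obtain ⟨t0⟩ := (tdA.bag_connected ⟨x, hxA⟩).nonempty
              refine { preconnected := fun z z' => ?_,
                       nonempty := ⟨⟨Sum.inl t0.1, (memL x hxA t0.1).2 t0.2⟩⟩ }
              obtain ⟨t, ht, rfl⟩ := honly z
              obtain ⟨t', ht', rfl⟩ := honly z'
              exact reachL x hxA t t' ((memL x hxA t).1 ht) ((memL x hxA t').1 ht')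
            · have hxB : x ∈ B := hxC
              have hxA : x ∉ A := fun ha => ha.elim (fun h => hxS h) (fun h => hxC h)
              have honly : ∀ z : ↥{s | x ∈ Sum.elim (fun t => Subtype.val '' (tdA.bag t)) (fun t => Subtype.val '' (tdB.bag t)) s}, ∃ t, ∃ h : Sum.inr t ∈ {s | x ∈ Sum.elim (fun t => Subtype.val '' (tdA.bag t)) (fun t => Subtype.val '' (tdB.bag t)) s},
                  z = ⟨Sum.inr t, h⟩ := by
                rintro ⟨(t | t), hz⟩
                · exfalso
                  obtain ⟨x0, _, hval⟩ := hz
                  exact hxA (hval ▸ x0.2)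
                · exact ⟨t, hz, rfl⟩
              obtain ⟨t0⟩ := (tdB.bag_connected ⟨x, hxB⟩).nonempty
              refine { preconnected := fun z z' => ?_,
                       nonempty := ⟨⟨Sum.inr t0.1, (memR x hxB t0.1).2 t0.2⟩⟩ }
              obtain ⟨t, ht, rfl⟩ := honly z
              obtain ⟨t', ht', rfl⟩ := honly z'
              exact reachR x hxB t t' ((memR x hxB t).1 ht) ((memR x hxB t').1 ht')
        refine ⟨⟨tdA.T ⊕ tdB.T, inferInstance, glue' tdA.tree tdB.tree tA tB,
          glue_isTree' tdA.isTree tdB.isTree,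
          Sum.elim (fun t => Subtype.val '' (tdA.bag t)) (fun t => Subtype.val '' (tdB.bag t)),
          hbc, ?_⟩, ?_, ?_⟩
        · -- bag_cover
          intro x y hadj
          rcases hedge hadj with ⟨hx, hy⟩ | ⟨hx, hy⟩
          · obtain ⟨t, h1, h2⟩ := tdA.bag_cover
              (show (G.induce A).Adj ⟨x, hx⟩ ⟨y, hy⟩ from hadj)
            exact ⟨.inl t, ⟨⟨x, hx⟩, h1, rfl⟩, ⟨⟨y, hy⟩, h2, rfl⟩⟩
          · obtain ⟨t, h1, h2⟩ := tdB.bag_cover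
              (show (G.induce B).Adj ⟨x, hx⟩ ⟨y, hy⟩ from hadj)
            exact ⟨.inr t, ⟨⟨x, hx⟩, h1, rfl⟩, ⟨⟨y, hy⟩, h2, rfl⟩⟩
        · -- atoms
          rintro (t | t)
          · exact IsAtomGraph.of_iso' (induceInduceIso' G A (tdA.bag t)).symm (hatomA t)
          · exact IsAtomGraph.of_iso' (induceInduceIso' G B (tdB.bag t)).symm (hatomB t)
        · -- adhesion cliques
          rintro (t | t) (u | u) hadj
          · have h := glue_adj_inl_inl'.1 hadj
            have : Subtype.val '' tdA.bag t ∩ Subtype.val '' tdA.bag u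
                = Subtype.val '' (tdA.bag t ∩ tdA.bag u) :=
              (Set.image_inter Subtype.val_injective).symm
            show G.IsClique (Subtype.val '' tdA.bag t ∩ Subtype.val '' tdA.bag u)
            rw [this]
            exact isClique_induce_iff'.1 (hclA h)
          · refine hcl.subset ?_
            rintro x ⟨⟨x1, h1, rfl⟩, ⟨x2, h2, he⟩⟩
            exact hABS ⟨x1.2, he ▸ x2.2⟩
          · refine hcl.subset ?_
            rintro x ⟨⟨x1, h1, rfl⟩, ⟨x2, h2, he⟩⟩
            exact hABS ⟨he ▸ x2.2, x1.2⟩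
          · have h := glue_adj_inr_inr'.1 hadj
            have : Subtype.val '' tdB.bag t ∩ Subtype.val '' tdB.bag u
                = Subtype.val '' (tdB.bag t ∩ tdB.bag u) :=
              (Set.image_inter Subtype.val_injective).symm
            show G.IsClique (Subtype.val '' tdB.bag t ∩ Subtype.val '' tdB.bag u)
            rw [this]
            exact isClique_induce_iff'.1 (hclB h)

end Main

/-- Every finite graph of tree width at most `k` has a tree decomposition whose
bags induce atoms and whose adhesion sets (intersections of bags along tree edges) are cliques;
consequently the adhesion is at most `k + 1`. -/
theorem exists_treeDecomp_atoms_clique_adhesion {V : Type} [Fintype V] (k : ℕ)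
    (G : SimpleGraph V) (htw : G.HasTreeDecompWidthLE k) :
    ∃ td : G.TreeDecomp,
      (∀ t, (G.induce (td.bag t)).IsAtomGraph) ∧
      (∀ ⦃t u⦄, td.tree.Adj t u → G.IsClique (td.bag t ∩ td.bag u)) ∧
      (∀ ⦃t u⦄, td.tree.Adj t u → (td.bag t ∩ td.bag u).ncard ≤ k + 1) := by
  obtain ⟨td, hatoms, hcl⟩ := aux_decomp (Fintype.card V) V ‹_› G le_rfl
  obtain ⟨td0, hw⟩ := htw
  refine ⟨td, hatoms, hcl, ?_⟩
  intro t u hadj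
  obtain ⟨t0, hsub⟩ := td0.exists_bag_superset (hcl hadj)
  calc (td.bag t ∩ td.bag u).ncard ≤ (td0.bag t0).ncard :=
        Set.ncard_le_ncard hsub (Set.toFinite _)
    _ ≤ k + 1 := hw t0
end
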